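/- arXiv:2010.10760 — 2 statements merged into one kernel-verified Lean document; each statement's English description precedes it below -/
import Mathlib

section
/- Key approximation lemma (equation (36)). Fix t ∈ ℝ. Suppose x ∈ 𝓑_{ε1,ε2}, g is a window function with threshold τ0 and corresponding α, and σ(t) > 0 satisfies the separation condition σ(t) ≥ 2α/(φ'_k(t) − φ'_{k−1}(t)) for all t and k = 1,…,K. Then for every ℓ ∈ {0,1,…,K} and every η with |η − φ'_ℓ(t)| < α/σ(t), |Ṽ_x(t,η) − x_ℓ(t) ĝ(σ(t)(η − φ'_ℓ(t)))| ≤ err_ℓ(t). In particular, taking η = φ'_ℓ(t), |Ṽ_x(t, φ'_ℓ(t))| ≥ A_ℓ(t) − err_ℓ(t). -/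
open MeasureTheory Real

noncomputable section

/-- The adaptive short-time Fourier transform with time-varying window width `σ`. -/
def aSTFT (x : ℝ → ℂ) (g : ℝ → ℝ) (σ : ℝ → ℝ) (t η : ℝ) : ℂ :=
  ∫ τ : ℝ, x (t + τ) * (((σ t)⁻¹ * g (τ / σ t) : ℝ) : ℂ) *
    Complex.exp (-(2 * (π : ℂ) * η * τ) * Complex.I)

/-- The Fourier transform `ĝ` of the window `g`. -/
def hatg (g : ℝ → ℝ) (ξ : ℝ) : ℂ :=
  ∫ τ : ℝ, (g τ : ℂ) * Complex.exp (-(2 * (π : ℂ) * ξ * τ) * Complex.I)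

/-- The absolute moments `I_n = ∫ |τ^n g(τ)| dτ` of the window. -/
def momentI (g : ℝ → ℝ) (n : ℕ) : ℝ := ∫ τ : ℝ, |τ| ^ n * |g τ|

/-- The `k`-th component `x_k(s) = A_k(s) e^{2πi φ_k(s)}`. -/
def xcomp (A φ : ℕ → ℝ → ℝ) (k : ℕ) (s : ℝ) : ℂ :=
  (A k s : ℂ) * Complex.exp ((2 * (π : ℂ) * φ k s) * Complex.I)

/-- `M(t) = Σ_{k=0}^K A_k(t)`. -/
def Msum (K : ℕ) (A : ℕ → ℝ → ℝ) (t : ℝ) : ℝ := ∑ k ∈ Finset.range (K + 1), A k t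

/-- `μ(t) = min_{0 ≤ k ≤ K} A_k(t)`. -/
def muMin (K : ℕ) (A : ℕ → ℝ → ℝ) (t : ℝ) : ℝ :=
  (Finset.range (K + 1)).inf' (by simp) fun k => A k t

/-- `λ_0(t) = ε1 I_1 σ(t) + π ε2 I_2 σ(t)²`. -/
def lam0 (g : ℝ → ℝ) (σ : ℝ → ℝ) (ε1 ε2 t : ℝ) : ℝ :=
  ε1 * momentI g 1 * σ t + π * ε2 * momentI g 2 * σ t ^ 2

/-- `err_ℓ(t) = M(t)λ_0(t) + Σ_{k≠ℓ} A_k(t) |ĝ(α(2|ℓ−k|−1))|`. -/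
def errl (K : ℕ) (A : ℕ → ℝ → ℝ) (g : ℝ → ℝ) (σ : ℝ → ℝ) (α ε1 ε2 : ℝ)
    (l : ℕ) (t : ℝ) : ℝ :=
  Msum K A t * lam0 g σ ε1 ε2 t +
    ∑ k ∈ (Finset.range (K + 1)).erase l,
      A k t * ‖hatg g (α * (2 * |(l : ℝ) - (k : ℝ)| - 1))‖

/-- `𝓖_t = {η : |Ṽ_x(t,η)| > ε̃1}`. -/
def Gt (x : ℝ → ℂ) (g : ℝ → ℝ) (σ : ℝ → ℝ) (t eps : ℝ) : Set ℝ :=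
  {η | eps < ‖aSTFT x g σ t η‖}

/-- `𝓖_{t,k} = {η ∈ 𝓖_t : |η − φ'_k(t)| < α/σ(t)}`. -/
def Gtk (x : ℝ → ℂ) (g : ℝ → ℝ) (σ : ℝ → ℝ) (φ : ℕ → ℝ → ℝ) (α t eps : ℝ)
    (k : ℕ) : Set ℝ :=
  {η | η ∈ Gt x g σ t eps ∧ |η - deriv (φ k) t| < α / σ t}

def Wfun (g : ℝ → ℝ) (s τ : ℝ) : ℂ := ((s⁻¹ * g (τ / s) : ℝ) : ℂ)

def Efun (η τ : ℝ) : ℂ := Complex.exp (-(2 * (π : ℂ) * η * τ) * Complex.I)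

lemma norm_exp_mul_I (z : ℂ) (hz : z.im = 0) : ‖Complex.exp (z * Complex.I)‖ = 1 := by
  rw [Complex.norm_exp]
  simp [Complex.mul_re, hz]

lemma norm_Efun (η τ : ℝ) : ‖Efun η τ‖ = 1 := norm_exp_mul_I _ (by simp)

lemma norm_Wfun (g : ℝ → ℝ) (s τ : ℝ) : ‖Wfun g s τ‖ = |s⁻¹ * g (τ / s)| := by
  rw [Wfun, Complex.norm_real, Real.norm_eq_abs]

lemma Wfun_integrable {g : ℝ → ℝ} (hgint : Integrable g) {s : ℝ} (hs : 0 < s) :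
    Integrable (Wfun g s) := ((hgint.comp_div hs.ne').const_mul _).ofReal

lemma helper_integrable {g : ℝ → ℝ} (hgint : Integrable g) {s : ℝ} (hs : 0 < s)
    (a p : ℝ → ℝ) (ha : Continuous a) (hp : Continuous p) (hC : ∃ C, ∀ u, |a u| ≤ C)
    (η : ℝ) :
    Integrable (fun τ => (a τ : ℂ) * Complex.exp ((2 * (π:ℂ) * p τ) * Complex.I) *
      Efun η τ * Wfun g s τ) := by
  have hF : Continuous (fun τ => (a τ : ℂ) * Complex.exp ((2 * (π:ℂ) * p τ) * Complex.I) *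
      Efun η τ) := by
    apply Continuous.mul
    apply Continuous.mul
    · exact Complex.continuous_ofReal.comp ha
    · exact Complex.continuous_exp.comp
        (((continuous_const.mul (Complex.continuous_ofReal.comp hp)).mul continuous_const))
    · exact Complex.continuous_exp.comp
        ((continuous_const.mul (Complex.continuous_ofReal.comp continuous_id)).neg.mul
          continuous_const)
  obtain ⟨C, hC⟩ := hC
  apply Integrable.bdd_mul (c := C) (Wfun_integrable hgint hs) hF.aestronglyMeasurable
  refine Filter.Eventually.of_forall (fun τ => ?_)
  rw [norm_mul, norm_mul, norm_Efun, Complex.norm_real, Real.norm_eq_abs,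
    norm_exp_mul_I _ (by simp)]
  simpa using hC τ


lemma exp_I_sub_le (a b : ℝ) :
    ‖Complex.exp ((a:ℂ) * Complex.I) - Complex.exp ((b:ℂ) * Complex.I)‖ ≤ |a - b| := by
  have h : ∀ u : ℝ, HasDerivAt (fun v : ℝ => Complex.exp ((v:ℂ) * Complex.I))
      (Complex.exp ((u:ℂ) * Complex.I) * Complex.I) u := by
    intro u
    have h1 : HasDerivAt (fun v : ℝ => ((v : ℂ) * Complex.I)) Complex.I u := by
      simpa using (Complex.ofRealCLM.hasDerivAt (x := u)).mul_const Complex.I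
    simpa using h1.cexp
  have := Convex.norm_image_sub_le_of_norm_hasDerivWithin_le
    (f := fun v : ℝ => Complex.exp ((v:ℂ) * Complex.I)) (C := 1) (s := Set.univ)
    (fun u _ => (h u).hasDerivWithinAt) (fun u _ => by
      simp [Complex.norm_exp]) convex_univ (Set.mem_univ b) (Set.mem_univ a)
  simpa [Real.norm_eq_abs] using this


lemma phase_taylor {φ : ℝ → ℝ} {ε2 : ℝ} (hφ : ContDiff ℝ 2 φ)
    (hφ'' : ∀ s, |deriv (deriv φ) s| ≤ ε2) (t τ : ℝ) :
    |φ (t + τ) - φ t - deriv φ t * τ| ≤ ε2 * τ ^ 2 / 2 := by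
  have hd1 : Differentiable ℝ φ := hφ.differentiable (by norm_num)
  have h2 : ContDiff ℝ 1 (deriv φ) := by
    have h2' : ContDiff ℝ ((1 : ℕ) + 1) φ := by exact_mod_cast hφ
    exact (contDiff_succ_iff_deriv.mp h2').2.2
  have hd2 : Differentiable ℝ (deriv φ) := h2.differentiable one_ne_zero
  -- Lipschitz bound on deriv φ
  have hlip : ∀ u : ℝ, |deriv φ (t + u) - deriv φ t| ≤ ε2 * |u| := by
    intro u
    have := Convex.norm_image_sub_le_of_norm_hasDerivWithin_le
      (f := deriv φ) (C := ε2) (s := Set.univ)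
      (fun v _ => (hd2 v).hasDerivAt.hasDerivWithinAt)
      (fun v _ => by simpa [Real.norm_eq_abs] using hφ'' v)
      convex_univ (Set.mem_univ t) (Set.mem_univ (t + u))
    simpa [Real.norm_eq_abs, abs_sub_comm] using this
  have hcont : Continuous (deriv φ) := h2.continuous
  have hftc : φ (t + τ) - φ t = ∫ u in (0:ℝ)..τ, deriv φ (t + u) := by
    have := intervalIntegral.integral_eq_sub_of_hasDerivAt (f := fun u => φ (t + u))
      (f' := fun u => deriv φ (t + u)) (a := 0) (b := τ)
      (fun u _ => (hd1 (t + u)).hasDerivAt.comp_const_add t u)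
      ((hcont.comp (by continuity)).intervalIntegrable 0 τ)
    simpa using this.symm
  have hconst : deriv φ t * τ = ∫ u in (0:ℝ)..τ, deriv φ t := by
    simp [mul_comm]
  have hkey : φ (t + τ) - φ t - deriv φ t * τ
      = ∫ u in (0:ℝ)..τ, (deriv φ (t + u) - deriv φ t) := by
    rw [hftc, hconst, intervalIntegral.integral_sub]
    · exact (hcont.comp (by continuity)).intervalIntegrable 0 τ
    · exact intervalIntegrable_const
  rw [hkey]
  have hε2 : 0 ≤ ε2 := le_trans (abs_nonneg _) (hφ'' 0)
  have hmain : |∫ u in (0:ℝ)..τ, (deriv φ (t + u) - deriv φ t)|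
      ≤ |∫ u in (0:ℝ)..τ, ε2 * abs u| := by
    have := intervalIntegral.norm_integral_le_abs_of_norm_le (μ := volume) (a := 0) (b := τ)
      (f := fun u => deriv φ (t + u) - deriv φ t) (g := fun u => ε2 * |u|)
      (Filter.Eventually.of_forall fun u => by simpa [Real.norm_eq_abs] using hlip u)
      ((continuous_const.mul continuous_abs).intervalIntegrable 0 τ)
    simpa [Real.norm_eq_abs] using this
  refine le_trans hmain ?_
  rcases le_or_gt 0 τ with hτ | hτ
  · have h1 : ∫ u in (0:ℝ)..τ, ε2 * abs u = ε2 * (τ ^ 2 / 2) := by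
      rw [intervalIntegral.integral_const_mul]
      congr 1
      rw [intervalIntegral.integral_congr (g := fun u => u)
        (fun u hu => abs_of_nonneg (by rw [Set.uIcc_of_le hτ] at hu; exact hu.1))]
      simp [integral_id]
    rw [h1, abs_of_nonneg (by positivity)]; ring_nf; exact le_rfl
  · have h1 : ∫ u in (0:ℝ)..τ, ε2 * abs u = ε2 * (-(τ ^ 2 / 2)) := by
      rw [intervalIntegral.integral_const_mul]
      congr 1
      rw [intervalIntegral.integral_congr (g := fun u => -u)
        (fun u hu => abs_of_nonpos (by rw [Set.uIcc_of_ge hτ.le] at hu; exact hu.2))]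
      rw [intervalIntegral.integral_neg]
      simp [integral_id]
    rw [h1, abs_of_nonpos (by nlinarith [sq_nonneg τ])]
    ring_nf; exact le_rfl


lemma window_fourier (g : ℝ → ℝ) {s : ℝ} (hs : 0 < s) (ξ : ℝ) :
    ∫ τ : ℝ, ((s⁻¹ * g (τ / s) : ℝ) : ℂ) * Complex.exp (-(2 * (π:ℂ) * ξ * τ) * Complex.I)
      = hatg g (s * ξ) := by
  have hs' : (s : ℂ) ≠ 0 := Complex.ofReal_ne_zero.mpr hs.ne'
  set F : ℝ → ℂ := fun u => ((s⁻¹ * g u : ℝ) : ℂ) *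
    Complex.exp (-(2 * (π:ℂ) * (s * ξ) * u) * Complex.I) with hF
  have hpt : ∀ τ : ℝ, ((s⁻¹ * g (τ / s) : ℝ) : ℂ) *
      Complex.exp (-(2 * (π:ℂ) * ξ * τ) * Complex.I) = F (τ / s) := by
    intro τ
    simp only [hF]
    congr 2
    push_cast
    field_simp
  simp_rw [hpt]
  rw [MeasureTheory.Measure.integral_comp_div F s]
  have : ∫ u, F u = (s⁻¹ : ℂ) * hatg g (s * ξ) := by
    rw [hatg, ← MeasureTheory.integral_const_mul]
    congr 1 with u
    push_cast [hF]
    ring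
  rw [this, abs_of_pos hs]
  rw [Complex.real_smul]
  field_simp

lemma window_moment (g : ℝ → ℝ) {s : ℝ} (hs : 0 < s) (n : ℕ) :
    ∫ τ : ℝ, |τ| ^ n * |s⁻¹ * g (τ / s)| = s ^ n * momentI g n := by
  set F : ℝ → ℝ := fun u => (s ^ n * s⁻¹) * (|u| ^ n * |g u|) with hF
  have hpt : ∀ τ : ℝ, |τ| ^ n * |s⁻¹ * g (τ / s)| = F (τ / s) := by
    intro τ
    have h1 : |τ| ^ n = s ^ n * |τ / s| ^ n := by
      rw [abs_div, abs_of_pos hs, div_pow, mul_div_cancel₀]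
      positivity
    rw [hF, h1, abs_mul, abs_of_pos (inv_pos.mpr hs)]
    ring
  simp_rw [hpt]
  rw [MeasureTheory.Measure.integral_comp_div F s, abs_of_pos hs, hF]
  rw [MeasureTheory.integral_const_mul, smul_eq_mul, momentI]
  field_simp


lemma moment_integrable1 {g : ℝ → ℝ} (hgI1 : Integrable fun τ : ℝ => τ * g τ)
    {s : ℝ} (hs : 0 < s) :
    Integrable (fun τ : ℝ => |τ| ^ 1 * |s⁻¹ * g (τ / s)|) := by
  apply ((hgI1.comp_div hs.ne').abs).congr
  refine Filter.Eventually.of_forall fun τ => ?_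
  simp only [abs_mul, abs_div, abs_inv, abs_of_pos hs, pow_one]
  ring

lemma moment_integrable2 {g : ℝ → ℝ} (hgI2 : Integrable fun τ : ℝ => τ ^ 2 * g τ)
    {s : ℝ} (hs : 0 < s) :
    Integrable (fun τ : ℝ => |τ| ^ 2 * |s⁻¹ * g (τ / s)|) := by
  apply (((hgI2.comp_div hs.ne').abs).const_mul s).congr
  refine Filter.Eventually.of_forall fun τ => ?_
  simp only [abs_mul, abs_pow, abs_div, abs_inv, abs_of_pos hs, div_pow]
  field_simp

lemma key_single {g : ℝ → ℝ} (hgint : Integrable g)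
    (hgI1 : Integrable fun τ : ℝ => τ * g τ) (hgI2 : Integrable fun τ : ℝ => τ ^ 2 * g τ)
    {s : ℝ} (hs : 0 < s) {ε1 ε2 : ℝ} (hε1 : 0 ≤ ε1)
    (A1 φ1 : ℝ → ℝ) (t η : ℝ)
    (hA1c : Continuous A1) (hC : ∃ C, ∀ u, |A1 u| ≤ C) (hpos : 0 < A1 t)
    (hAlip1 : ∀ u τ, |A1 (u + τ) - A1 u| ≤ ε1 * |τ| * A1 u)
    (hφ1 : ContDiff ℝ 2 φ1) (hφ''1 : ∀ u, |deriv (deriv φ1) u| ≤ ε2) :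
    ‖(∫ τ : ℝ, (A1 (t + τ) : ℂ) * Complex.exp ((2 * (π:ℂ) * φ1 (t + τ)) * Complex.I) *
        Efun η τ * Wfun g s τ)
      - (A1 t : ℂ) * Complex.exp ((2 * (π:ℂ) * φ1 t) * Complex.I) *
        hatg g (s * (η - deriv φ1 t))‖
      ≤ A1 t * (ε1 * momentI g 1 * s + π * ε2 * momentI g 2 * s ^ 2) := by
  have hε2 : 0 ≤ ε2 := le_trans (abs_nonneg _) (hφ''1 0)
  set c : ℝ → ℂ := fun τ =>
    (A1 t : ℂ) * Complex.exp ((2 * (π:ℂ) * ((φ1 t + deriv φ1 t * τ : ℝ) : ℂ)) * Complex.I) with hc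
  -- value of the modulated integral
  have hmval : (∫ τ : ℝ, c τ * Efun η τ * Wfun g s τ)
      = (A1 t : ℂ) * Complex.exp ((2 * (π:ℂ) * φ1 t) * Complex.I) *
        hatg g (s * (η - deriv φ1 t)) := by
    have hpt : ∀ τ : ℝ, c τ * Efun η τ * Wfun g s τ
        = ((A1 t : ℂ) * Complex.exp ((2 * (π:ℂ) * φ1 t) * Complex.I)) *
          (((s⁻¹ * g (τ / s) : ℝ) : ℂ) *
            Complex.exp (-(2 * (π:ℂ) * ((η - deriv φ1 t : ℝ) : ℂ) * τ) * Complex.I)) := by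
      intro τ
      have hXY : Complex.exp ((2 * (π:ℂ) * ((φ1 t + deriv φ1 t * τ : ℝ) : ℂ)) * Complex.I) *
            Complex.exp (-(2 * (π:ℂ) * η * τ) * Complex.I)
          = Complex.exp ((2 * (π:ℂ) * φ1 t) * Complex.I) *
            Complex.exp (-(2 * (π:ℂ) * ((η - deriv φ1 t : ℝ) : ℂ) * τ) * Complex.I) := by
        rw [← Complex.exp_add, ← Complex.exp_add]
        congr 1
        push_cast
        ring
      calc c τ * Efun η τ * Wfun g s τ
          = (A1 t : ℂ) * (Complex.exp ((2 * (π:ℂ) * ((φ1 t + deriv φ1 t * τ : ℝ) : ℂ)) * Complex.I) *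
              Complex.exp (-(2 * (π:ℂ) * η * τ) * Complex.I)) * Wfun g s τ := by
            simp only [hc, Efun]; ring
        _ = (A1 t : ℂ) * (Complex.exp ((2 * (π:ℂ) * φ1 t) * Complex.I) *
              Complex.exp (-(2 * (π:ℂ) * ((η - deriv φ1 t : ℝ) : ℂ) * τ) * Complex.I)) * Wfun g s τ := by
            rw [hXY]
        _ = _ := by rw [Wfun]; ring
    simp_rw [hpt]
    rw [MeasureTheory.integral_const_mul, window_fourier g hs (η - deriv φ1 t)]
  -- integrability
  have hfint : Integrable (fun τ : ℝ => (A1 (t + τ) : ℂ) *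
      Complex.exp ((2 * (π:ℂ) * φ1 (t + τ)) * Complex.I) * Efun η τ * Wfun g s τ) := by
    apply helper_integrable hgint hs (fun τ => A1 (t + τ)) (fun τ => φ1 (t + τ))
      (hA1c.comp (by continuity)) (hφ1.continuous.comp (by continuity)) _ η
    obtain ⟨C, hC⟩ := hC
    exact ⟨C, fun u => hC _⟩
  have hmint : Integrable (fun τ : ℝ => c τ * Efun η τ * Wfun g s τ) := by
    exact helper_integrable hgint hs (fun _ => A1 t) (fun τ => φ1 t + deriv φ1 t * τ)
      continuous_const (by continuity) ⟨|A1 t|, fun u => le_rfl⟩ η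
  -- pointwise bound
  have hpb : ∀ τ : ℝ, ‖(A1 (t + τ) : ℂ) *
        Complex.exp ((2 * (π:ℂ) * φ1 (t + τ)) * Complex.I) * Efun η τ * Wfun g s τ
        - c τ * Efun η τ * Wfun g s τ‖
      ≤ A1 t * (ε1 * |τ| + π * ε2 * τ ^ 2) * |s⁻¹ * g (τ / s)| := by
    intro τ
    have hsplit : (A1 (t + τ) : ℂ) *
          Complex.exp ((2 * (π:ℂ) * φ1 (t + τ)) * Complex.I) * Efun η τ * Wfun g s τ
          - c τ * Efun η τ * Wfun g s τ
        = (((A1 (t + τ) - A1 t : ℝ) : ℂ) *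
            Complex.exp (((2 * π * φ1 (t + τ) : ℝ) : ℂ) * Complex.I)
          + (A1 t : ℂ) * (Complex.exp (((2 * π * φ1 (t + τ) : ℝ) : ℂ) * Complex.I)
            - Complex.exp (((2 * π * (φ1 t + deriv φ1 t * τ) : ℝ) : ℂ) * Complex.I)))
          * Efun η τ * Wfun g s τ := by
      have e1 : (2 * (π:ℂ) * φ1 (t + τ)) * Complex.I
          = ((2 * π * φ1 (t + τ) : ℝ) : ℂ) * Complex.I := by push_cast; ring
      have e2 : (2 * (π:ℂ) * ((φ1 t + deriv φ1 t * τ : ℝ) : ℂ)) * Complex.I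
          = ((2 * π * (φ1 t + deriv φ1 t * τ) : ℝ) : ℂ) * Complex.I := by push_cast; ring
      simp only [hc]
      rw [e1, e2]
      push_cast
      ring
    rw [hsplit, norm_mul, norm_mul, norm_Efun, norm_Wfun]
    have hd : ‖((A1 (t + τ) - A1 t : ℝ) : ℂ) *
          Complex.exp (((2 * π * φ1 (t + τ) : ℝ) : ℂ) * Complex.I)
        + (A1 t : ℂ) * (Complex.exp (((2 * π * φ1 (t + τ) : ℝ) : ℂ) * Complex.I)
          - Complex.exp (((2 * π * (φ1 t + deriv φ1 t * τ) : ℝ) : ℂ) * Complex.I))‖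
        ≤ A1 t * (ε1 * |τ| + π * ε2 * τ ^ 2) := by
      refine le_trans (norm_add_le _ _) ?_
      rw [norm_mul, norm_mul, Complex.norm_real, Complex.norm_real, Real.norm_eq_abs,
        Real.norm_eq_abs, norm_exp_mul_I _ (by simp), mul_one]
      have h1 : |A1 (t + τ) - A1 t| ≤ ε1 * |τ| * A1 t := hAlip1 t τ
      have h2 : ‖Complex.exp (((2 * π * φ1 (t + τ) : ℝ) : ℂ) * Complex.I)
          - Complex.exp (((2 * π * (φ1 t + deriv φ1 t * τ) : ℝ) : ℂ) * Complex.I)‖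
          ≤ π * ε2 * τ ^ 2 := by
        refine le_trans (exp_I_sub_le _ _) ?_
        have h3 : (2 * π * φ1 (t + τ)) - 2 * π * (φ1 t + deriv φ1 t * τ)
            = 2 * π * (φ1 (t + τ) - φ1 t - deriv φ1 t * τ) := by ring
        rw [h3, abs_mul, abs_of_pos (by positivity : (0:ℝ) < 2 * π)]
        have h4 := phase_taylor hφ1 hφ''1 t τ
        nlinarith [Real.pi_pos]
      have h5 : |A1 t| = A1 t := abs_of_pos hpos
      rw [h5]
      nlinarith [abs_nonneg τ, hpos, Real.pi_pos, sq_nonneg τ,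
        mul_le_mul_of_nonneg_left h2 hpos.le]
    calc ‖_ + _‖ * 1 * |s⁻¹ * g (τ / s)| = ‖_ + _‖ * |s⁻¹ * g (τ / s)| := by ring
      _ ≤ A1 t * (ε1 * |τ| + π * ε2 * τ ^ 2) * |s⁻¹ * g (τ / s)| :=
          mul_le_mul_of_nonneg_right hd (abs_nonneg _)
  -- bound integrability and value
  have hint1 := moment_integrable1 hgI1 hs
  have hint2 := moment_integrable2 hgI2 hs
  have hBint : Integrable (fun τ : ℝ =>
      A1 t * (ε1 * |τ| + π * ε2 * τ ^ 2) * |s⁻¹ * g (τ / s)|) := by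
    apply (((hint1.const_mul (A1 t * ε1)).add
      (hint2.const_mul (A1 t * (π * ε2))))).congr
    refine Filter.Eventually.of_forall fun τ => ?_
    simp only [Pi.add_apply]
    rw [sq_abs, pow_one]
    ring
  have hBval : (∫ τ : ℝ, A1 t * (ε1 * |τ| + π * ε2 * τ ^ 2) * |s⁻¹ * g (τ / s)|)
      = A1 t * (ε1 * momentI g 1 * s + π * ε2 * momentI g 2 * s ^ 2) := by
    have hre : (fun τ : ℝ => A1 t * (ε1 * |τ| + π * ε2 * τ ^ 2) * |s⁻¹ * g (τ / s)|)
        = fun τ : ℝ => (A1 t * ε1) * (|τ| ^ 1 * |s⁻¹ * g (τ / s)|)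
          + (A1 t * (π * ε2)) * (|τ| ^ 2 * |s⁻¹ * g (τ / s)|) := by
      funext τ
      rw [sq_abs, pow_one]
      ring
    rw [hre, integral_add (hint1.const_mul _) (hint2.const_mul _),
      MeasureTheory.integral_const_mul, MeasureTheory.integral_const_mul,
      window_moment g hs 1, window_moment g hs 2]
    ring
  rw [← hmval, ← integral_sub hfint hmint]
  exact le_trans (norm_integral_le_of_norm_le hBint (Filter.Eventually.of_forall hpb))
    (le_of_eq hBval)


set_option maxHeartbeats 1000000 in
theorem key_approximation (K : ℕ) (A φ : ℕ → ℝ → ℝ) (ε1 ε2 : ℝ) (x : ℝ → ℂ)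
    (g : ℝ → ℝ) (σ : ℝ → ℝ) (τ0 α t : ℝ)
    (hε1 : 0 < ε1) (hε2 : 0 < ε2)
    (hAreg : ∀ k ≤ K, ContDiff ℝ 1 (A k))
    (hAbdd : ∀ k ≤ K, ∃ C, ∀ s, |A k s| ≤ C)
    (hφreg : ∀ k ≤ K, ContDiff ℝ 2 (φ k))
    (hφ0 : ∀ s, φ 0 s = 0)
    (hApos : ∀ k ≤ K, ∀ s, 0 < A k s)
    (hφ'pos : ∀ k, 1 ≤ k → k ≤ K → ∃ c > 0, ∀ s, c ≤ deriv (φ k) s)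
    (hφ'bdd : ∀ k, 1 ≤ k → k ≤ K → ∃ C, ∀ s, deriv (φ k) s ≤ C)
    (hfreq : ∃ d > 0, ∀ k, 2 ≤ k → k ≤ K → ∀ s, d ≤ deriv (φ k) s - deriv (φ (k - 1)) s)
    (hAlip : ∀ k ≤ K, ∀ s τ, |A k (s + τ) - A k s| ≤ ε1 * |τ| * A k s)
    (hφ'' : ∀ k, 1 ≤ k → k ≤ K → ∀ s, |deriv (deriv (φ k)) s| ≤ ε2)
    (hx : ∀ s, x s = ∑ k ∈ Finset.range (K + 1), xcomp A φ k s)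
    (hgint : Integrable g)
    (hgL2 : MemLp g 2 (volume : Measure ℝ))
    (hgI1 : Integrable fun τ : ℝ => τ * g τ)
    (hgI2 : Integrable fun τ : ℝ => τ ^ 2 * g τ)
    (hgnorm : (∫ τ : ℝ, g τ) = 1)
    (hgeven : ∀ ξ, ‖hatg g (-ξ)‖ = ‖hatg g ξ‖)
    (hgdec : ∀ ξ1 ξ2, 0 ≤ ξ1 → ξ1 ≤ ξ2 → ‖hatg g ξ2‖ ≤ ‖hatg g ξ1‖)
    (hτ0 : 0 < τ0) (hτ0' : τ0 < 1)
    (hα : 0 < α) (hgα : ‖hatg g α‖ = τ0)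
    (hσ : ∀ s, 0 < σ s)
    (hsep : ∀ s, ∀ k, 1 ≤ k → k ≤ K →
      2 * α / (deriv (φ k) s - deriv (φ (k - 1)) s) ≤ σ s)
    :
    ∀ l ≤ K,
      (∀ η : ℝ, |η - deriv (φ l) t| < α / σ t →
        ‖aSTFT x g σ t η - xcomp A φ l t * hatg g (σ t * (η - deriv (φ l) t))‖ ≤
          errl K A g σ α ε1 ε2 l t) ∧
      A l t - errl K A g σ α ε1 ε2 l t ≤ ‖aSTFT x g σ t (deriv (φ l) t)‖ := by
  intro l hl
  have hst : 0 < σ t := hσ t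
  have hφ0fun : φ 0 = fun _ => (0:ℝ) := funext hφ0
  have hφ'0 : ∀ u, deriv (φ 0) u = 0 := by
    intro u; rw [hφ0fun]; simp
  have hφ''all : ∀ k ≤ K, ∀ u, |deriv (deriv (φ k)) u| ≤ ε2 := by
    intro k hk u
    rcases Nat.eq_zero_or_pos k with rfl | hk1
    · rw [hφ0fun]
      simpa using hε2.le
    · exact hφ'' k hk1 hk u
  obtain ⟨d0, hd0, hdle⟩ := hfreq
  have hgap : ∀ j, 1 ≤ j → j ≤ K → ∀ u,
      2 * α / σ u ≤ deriv (φ j) u - deriv (φ (j - 1)) u := by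
    intro j hj1 hjK u
    have hd : 0 < deriv (φ j) u - deriv (φ (j - 1)) u := by
      rcases Nat.lt_or_ge j 2 with h2 | h2
      · have hj : j = 1 := by omega
        subst hj
        obtain ⟨c, hc0, hc⟩ := hφ'pos 1 le_rfl hjK
        have := hc u
        simp only [Nat.sub_self, hφ'0 u]
        linarith
      · linarith [hdle j h2 hjK u]
    have h1 := hsep u j hj1 hjK
    rw [div_le_iff₀ hd] at h1
    rw [div_le_iff₀ (hσ u)]
    nlinarith [hσ u]
  have htele : ∀ a m : ℕ, 1 ≤ m → a + m ≤ K →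
      deriv (φ a) t + (m : ℝ) * (2 * α / σ t) ≤ deriv (φ (a + m)) t := by
    intro a m
    induction m with
    | zero => intro h; omega
    | succ n ih =>
      intro _ hK
      have hgap1 := hgap (a + n + 1) (by omega) (by omega) t
      have he : a + n + 1 - 1 = a + n := by omega
      rw [he] at hgap1
      have he2 : a + (n + 1) = a + n + 1 := by omega
      rw [he2]
      rcases Nat.eq_zero_or_pos n with rfl | hn
      · push_cast
        simp only [Nat.add_zero] at hgap1
        linarith
      · have h1 := ih hn (by omega)
        push_cast
        push_cast at h1
        linarith
  have hq : 0 < 2 * α / σ t := by positivity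
  have hsep_lk : ∀ k ≤ K, k ≠ l →
      2 * α / σ t * |(l : ℝ) - (k : ℝ)| ≤ |deriv (φ l) t - deriv (φ k) t| := by
    intro k hk hkl
    rcases Nat.lt_or_ge k l with h | h
    · have h1 := htele k (l - k) (by omega) (by omega)
      have h2 : k + (l - k) = l := by omega
      rw [h2] at h1
      have hm1 : (1:ℝ) ≤ ((l - k : ℕ) : ℝ) := by
        have : 1 ≤ l - k := by omega
        exact_mod_cast this
      have hcast : ((l - k : ℕ) : ℝ) = (l : ℝ) - k := by
        push_cast [Nat.cast_sub h.le]
        ring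
      have habs : |(l : ℝ) - k| = (l : ℝ) - k := by
        apply abs_of_nonneg
        have : (k:ℝ) ≤ l := by exact_mod_cast h.le
        linarith
      have habs2 : |deriv (φ l) t - deriv (φ k) t| = deriv (φ l) t - deriv (φ k) t := by
        apply abs_of_nonneg
        nlinarith
      rw [habs, habs2, ← hcast]
      nlinarith
    · have h' : l < k := by omega
      have h1 := htele l (k - l) (by omega) (by omega)
      have h2 : l + (k - l) = k := by omega
      rw [h2] at h1
      have hcast : ((k - l : ℕ) : ℝ) = (k : ℝ) - l := by
        push_cast [Nat.cast_sub h'.le]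
        ring
      have hm1 : (1:ℝ) ≤ ((k - l : ℕ) : ℝ) := by
        have : 1 ≤ k - l := by omega
        exact_mod_cast this
      have habs : |(l : ℝ) - k| = (k : ℝ) - l := by
        rw [abs_sub_comm]
        apply abs_of_nonneg
        have : (l:ℝ) ≤ k := by exact_mod_cast h'.le
        linarith
      have habs2 : |deriv (φ l) t - deriv (φ k) t| = deriv (φ k) t - deriv (φ l) t := by
        rw [abs_sub_comm]
        apply abs_of_nonneg
        nlinarith
      rw [habs, habs2, ← hcast]
      nlinarith
  have hxnorm : ∀ k ≤ K, ‖xcomp A φ k t‖ = A k t := by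
    intro k hk
    rw [xcomp, norm_mul, Complex.norm_real, Real.norm_eq_abs, abs_of_pos (hApos k hk t),
      norm_exp_mul_I _ (by simp), mul_one]
  -- the main estimate
  have main : ∀ η : ℝ, |η - deriv (φ l) t| < α / σ t →
      ‖aSTFT x g σ t η - xcomp A φ l t * hatg g (σ t * (η - deriv (φ l) t))‖ ≤
        errl K A g σ α ε1 ε2 l t := by
    intro η hη
    -- single-component estimates
    have hk_est : ∀ k ≤ K,
        ‖(∫ τ : ℝ, xcomp A φ k (t + τ) * Efun η τ * Wfun g (σ t) τ)
          - xcomp A φ k t * hatg g (σ t * (η - deriv (φ k) t))‖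
        ≤ A k t * lam0 g σ ε1 ε2 t := by
      intro k hk
      have := key_single hgint hgI1 hgI2 hst hε1.le (A k) (φ k) t η
        (hAreg k hk).continuous (hAbdd k hk) (hApos k hk t)
        (fun u τ => hAlip k hk u τ) (hφreg k hk) (hφ''all k hk)
      simpa [xcomp, lam0] using this
    -- integrability of the components
    have hf_int : ∀ k ∈ Finset.range (K + 1),
        Integrable (fun τ : ℝ => xcomp A φ k (t + τ) * Efun η τ * Wfun g (σ t) τ) := by
      intro k hk
      have hkK : k ≤ K := Finset.mem_range_succ_iff.mp hk
      have h := helper_integrable hgint hst (fun τ => A k (t + τ)) (fun τ => φ k (t + τ))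
        ((hAreg k hkK).continuous.comp (continuous_const.add continuous_id))
        ((hφreg k hkK).continuous.comp (continuous_const.add continuous_id))
        (by obtain ⟨C, hC⟩ := hAbdd k hkK; exact ⟨C, fun u => hC _⟩) η
      exact h.congr (Filter.Eventually.of_forall fun τ => by simp only [xcomp])
    -- decomposition of the STFT
    have hV : aSTFT x g σ t η = ∑ k ∈ Finset.range (K + 1),
        ∫ τ : ℝ, xcomp A φ k (t + τ) * Efun η τ * Wfun g (σ t) τ := by
      rw [aSTFT, ← integral_finset_sum _ hf_int]
      congr 1
      funext τ
      rw [hx (t + τ), Finset.sum_mul, Finset.sum_mul]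
      refine Finset.sum_congr rfl fun k _ => ?_
      rw [Efun, Wfun]
      ring
    have hmem : l ∈ Finset.range (K + 1) := Finset.mem_range_succ_iff.mpr hl
    have hdecomp : aSTFT x g σ t η - xcomp A φ l t * hatg g (σ t * (η - deriv (φ l) t))
        = (∑ k ∈ Finset.range (K + 1),
            ((∫ τ : ℝ, xcomp A φ k (t + τ) * Efun η τ * Wfun g (σ t) τ)
              - xcomp A φ k t * hatg g (σ t * (η - deriv (φ k) t))))
          + ∑ k ∈ (Finset.range (K + 1)).erase l,
              xcomp A φ k t * hatg g (σ t * (η - deriv (φ k) t)) := by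
      rw [hV, Finset.sum_sub_distrib, Finset.sum_erase_eq_sub hmem]
      ring
    -- cross-term bound
    have hcross : ∀ k ≤ K, k ≠ l →
        ‖hatg g (σ t * (η - deriv (φ k) t))‖ ≤
          ‖hatg g (α * (2 * |(l : ℝ) - (k : ℝ)| - 1))‖ := by
      intro k hk hkl
      have hD1 : (1:ℝ) ≤ |(l : ℝ) - (k : ℝ)| := by
        have hne : (l:ℤ) - (k:ℤ) ≠ 0 := by
          intro hcc
          apply hkl
          omega
        have h := Int.one_le_abs hne
        have : ((1:ℤ):ℝ) ≤ ((|(l:ℤ) - (k:ℤ)|:ℤ):ℝ) := by exact_mod_cast h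
        push_cast at this
        linarith
      have hsk := hsep_lk k hk hkl
      have t1 : |deriv (φ l) t - deriv (φ k) t|
          ≤ |η - deriv (φ l) t| + |η - deriv (φ k) t| := by
        have := abs_sub_le (deriv (φ l) t) η (deriv (φ k) t)
        rw [abs_sub_comm (deriv (φ l) t) η] at this
        linarith
      have h1 : α * (2 * |(l : ℝ) - (k : ℝ)| - 1) ≤ |σ t * (η - deriv (φ k) t)| := by
        rw [abs_mul, abs_of_pos hst]
        have e1 : σ t * (2 * α / σ t * |(l : ℝ) - (k : ℝ)|)
            = 2 * α * |(l : ℝ) - (k : ℝ)| := by field_simp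
        have e2 : σ t * (α / σ t) = α := by field_simp
        have m1 : σ t * (2 * α / σ t * |(l : ℝ) - (k : ℝ)|)
            ≤ σ t * |deriv (φ l) t - deriv (φ k) t| :=
          mul_le_mul_of_nonneg_left hsk hst.le
        have m2 : σ t * |η - deriv (φ l) t| < σ t * (α / σ t) :=
          (mul_lt_mul_iff_right₀ hst).mpr hη
        have m3 : σ t * |deriv (φ l) t - deriv (φ k) t|
            ≤ σ t * |η - deriv (φ l) t| + σ t * |η - deriv (φ k) t| := by
          rw [← mul_add]
          exact mul_le_mul_of_nonneg_left t1 hst.le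
        nlinarith
      have habs : ‖hatg g (σ t * (η - deriv (φ k) t))‖
          = ‖hatg g |σ t * (η - deriv (φ k) t)|‖ := by
        rcases abs_choice (σ t * (η - deriv (φ k) t)) with h | h
        · rw [h]
        · rw [h, hgeven]
      rw [habs]
      exact hgdec _ _ (by nlinarith) h1
    -- put everything together
    rw [hdecomp]
    refine le_trans (norm_add_le _ _) ?_
    refine le_trans (add_le_add (norm_sum_le _ _) (norm_sum_le _ _)) ?_
    rw [errl]
    refine add_le_add ?_ ?_
    · rw [Msum, Finset.sum_mul]
      exact Finset.sum_le_sum fun k hk => hk_est k (Finset.mem_range_succ_iff.mp hk)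
    · refine Finset.sum_le_sum fun k hk => ?_
      have hkK : k ≤ K := Finset.mem_range_succ_iff.mp (Finset.mem_of_mem_erase hk)
      have hkl : k ≠ l := Finset.ne_of_mem_erase hk
      rw [norm_mul, hxnorm k hkK]
      exact mul_le_mul_of_nonneg_left (hcross k hkK hkl) (hApos k hkK t).le
  refine ⟨main, ?_⟩
  have h0 := main (deriv (φ l) t) (by simpa using div_pos hα hst)
  have hz : σ t * (deriv (φ l) t - deriv (φ l) t) = 0 := by ring
  rw [hz] at h0
  have hg0 : hatg g 0 = 1 := by
    have e : hatg g 0 = ∫ τ : ℝ, ((g τ : ℝ) : ℂ) := by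
      rw [hatg]
      congr 1
      funext τ
      norm_num
    have e2 : (∫ τ : ℝ, ((g τ : ℝ) : ℂ)) = ((∫ τ : ℝ, g τ : ℝ) : ℂ) := integral_ofReal
    rw [e, e2, hgnorm]
    norm_num
  rw [hg0, mul_one] at h0
  have hxl : ‖xcomp A φ l t‖ = A l t := hxnorm l hl
  have h2 := norm_sub_norm_le (xcomp A φ l t) (aSTFT x g σ t (deriv (φ l) t))
  rw [norm_sub_rev] at h2
  linarith
end
end

section
/- Theorem 3.1(a). Fix t ∈ ℝ. Suppose x ∈ 𝓓_{ε1,ε3}, g is an admissible window function, σ(t) > 0 is such that the zones O_k, 0 ≤ k ≤ K, are pairwise disjoint, Err_ℓ(t) < (1/2)|G_ℓ(0)| A_ℓ(t) for each ℓ, and 2M(t)(τ0 + Π_0(t)) ≤ g_0(t) μ(t). Let ε̃1 satisfy M(t)(τ0 + Π_0(t)) ≤ ε̃1 ≤ g_0(t)μ(t) − M(t)(τ0 + Π_0(t)). Then 𝓖_t = {η : |Ṽ_x(t,η)| > ε̃1} is the disjoint union of exactly the K+1 sets 𝓗_{t,k} = {η ∈ 𝓖_t : |η − φ'_k(t)|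 < α_k/σ(t)}, 0 ≤ k ≤ K, and each 𝓗_{t,k} is non-empty (in particular φ'_k(t) ∈ 𝓗_{t,k}). -/
open MeasureTheory Real

noncomputable section

/-- `G(ξ) = ∫ e^{iπcτ²} g(τ) e^{−2πiξτ} dτ`, the Fourier transform of the
chirp-modulated window. -/
def chirpG (g : ℝ → ℝ) (c ξ : ℝ) : ℂ :=
  ∫ τ : ℝ, Complex.exp (((π * c * τ ^ 2 : ℝ) : ℂ) * Complex.I) * (g τ : ℂ) *
    Complex.exp (-(2 * (π : ℂ) * ξ * τ) * Complex.I)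

/-- `ğ(ξ,λ) = ∫ g(τ) e^{−2πiξτ − iπλτ²} dτ` (used to define admissibility). -/
def breveG (g : ℝ → ℝ) (lam ξ : ℝ) : ℂ :=
  ∫ τ : ℝ, (g τ : ℂ) *
    Complex.exp (-(2 * (π : ℂ) * ξ * τ) * Complex.I - ((π * lam * τ ^ 2 : ℝ) : ℂ) * Complex.I)

/-- The chirp-rate parameter `σ(t)² φ''_k(t)` of the `k`-th component. -/
def crate (φ : ℕ → ℝ → ℝ) (σ : ℝ → ℝ) (k : ℕ) (t : ℝ) : ℝ :=
  σ t ^ 2 * deriv (deriv (φ k)) t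

/-- `Π_0(t) = ε1 I_1 σ(t) + (π/3) ε3 I_3 σ(t)³`. -/
def Pi0 (g : ℝ → ℝ) (σ : ℝ → ℝ) (ε1 ε3 t : ℝ) : ℝ :=
  ε1 * momentI g 1 * σ t + π / 3 * ε3 * momentI g 3 * σ t ^ 3

/-- `Υ_{k,ℓ} = α_k + α_ℓ + 2 Σ_{j between k and ℓ} α_j`. -/
def Ups (αf : ℕ → ℝ) (k l : ℕ) : ℝ :=
  αf k + αf l + 2 * ∑ j ∈ Finset.Ioo (min k l) (max k l), αf j

/-- `Err_ℓ(t) = M(t)Π_0(t) + Σ_{k≠ℓ} A_k(t) |G_k(Υ_{k,ℓ} − α_ℓ)|`. -/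
def ErrL (K : ℕ) (A φ : ℕ → ℝ → ℝ) (g : ℝ → ℝ) (σ : ℝ → ℝ) (αf : ℕ → ℝ)
    (ε1 ε3 : ℝ) (l : ℕ) (t : ℝ) : ℝ :=
  Msum K A t * Pi0 g σ ε1 ε3 t +
    ∑ k ∈ (Finset.range (K + 1)).erase l,
      A k t * ‖chirpG g (crate φ σ k t) (Ups αf k l - αf l)‖

/-- `g_0(t) = min_{0 ≤ k ≤ K} |G_k(0)|`. -/
def g0min (K : ℕ) (g : ℝ → ℝ) (φ : ℕ → ℝ → ℝ) (σ : ℝ → ℝ) (t : ℝ) : ℝ :=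
  (Finset.range (K + 1)).inf' (by simp) fun k => ‖chirpG g (crate φ σ k t) 0‖

/-- `𝓗_{t,k} = {η ∈ 𝓖_t : |η − φ'_k(t)| < α_k/σ(t)}`. -/
def Htk (x : ℝ → ℂ) (g : ℝ → ℝ) (σ : ℝ → ℝ) (φ : ℕ → ℝ → ℝ) (αf : ℕ → ℝ)
    (t eps : ℝ) (k : ℕ) : Set ℝ :=
  {η | η ∈ Gt x g σ t eps ∧ |η - deriv (φ k) t| < αf k / σ t}



lemma derivs3 (f : ℝ → ℝ) (hf : ContDiff ℝ 3 f) :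
    Differentiable ℝ f ∧ Differentiable ℝ (deriv f) ∧ Differentiable ℝ (deriv (deriv f)) ∧
      Continuous (deriv (deriv (deriv f))) := by
  rw [show (3 : WithTop ℕ∞) = 2 + 1 from rfl, contDiff_succ_iff_deriv] at hf
  obtain ⟨h1, -, hf⟩ := hf
  rw [show (2 : WithTop ℕ∞) = 1 + 1 from rfl, contDiff_succ_iff_deriv] at hf
  obtain ⟨h2, -, hf⟩ := hf
  rw [contDiff_one_iff_deriv] at hf
  exact ⟨h1, h2, hf.1, hf.2⟩

-- FTC bound lemma
lemma ftc_pow_bound (f f' : ℝ → ℝ) (C : ℝ) (n : ℕ)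
    (hd : ∀ s, HasDerivAt f (f' s) s) (hc : Continuous f')
    (h0 : f 0 = 0) (hb : ∀ s, |f' s| ≤ C * |s| ^ n) :
    ∀ h : ℝ, |f h| ≤ C * |h| ^ (n + 1) / (n + 1) := by
  intro h
  have hC : 0 ≤ C := by
    have h1 := hb 1; have h2 := abs_nonneg (f' 1); simp at h1; nlinarith
  have hftc : ∀ a b : ℝ, f b - f a = ∫ s in a..b, f' s :=
    fun a b => (intervalIntegral.integral_eq_sub_of_hasDerivAt (fun s _ => hd s)
      (hc.intervalIntegrable _ _)).symm
  rcases le_or_gt 0 h with hpos | hneg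
  · have : f h = ∫ s in (0:ℝ)..h, f' s := by
      have := hftc 0 h; rw [h0] at this; linarith
    rw [this]
    calc |∫ s in (0:ℝ)..h, f' s| ≤ ∫ s in (0:ℝ)..h, |f' s| :=
          intervalIntegral.abs_integral_le_integral_abs hpos
      _ ≤ ∫ s in (0:ℝ)..h, C * s ^ n := by
          apply intervalIntegral.integral_mono_on hpos
            (hc.abs.intervalIntegrable _ _)
            ((continuous_const.mul (continuous_pow n)).intervalIntegrable _ _)
          intro s hs
          calc |f' s| ≤ C * |s| ^ n := hb s
            _ = C * s ^ n := by rw [abs_of_nonneg hs.1]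
      _ = C * (h ^ (n+1) / (n+1)) := by
          rw [intervalIntegral.integral_const_mul, integral_pow]; ring_nf
      _ = C * |h| ^ (n + 1) / (n + 1) := by rw [abs_of_nonneg hpos]; ring
  · have : f h = -∫ s in h..(0:ℝ), f' s := by
      have := hftc h 0; rw [h0] at this; linarith
    rw [this, abs_neg]
    calc |∫ s in h..(0:ℝ), f' s| ≤ ∫ s in h..(0:ℝ), |f' s| :=
          intervalIntegral.abs_integral_le_integral_abs hneg.le
      _ ≤ ∫ s in h..(0:ℝ), C * (-s) ^ n := by
          apply intervalIntegral.integral_mono_on hneg.le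
            (hc.abs.intervalIntegrable _ _)
            ((continuous_const.mul ((continuous_neg).pow n)).intervalIntegrable _ _)
          intro s hs
          calc |f' s| ≤ C * |s| ^ n := hb s
            _ = C * (-s) ^ n := by rw [abs_of_nonpos hs.2]
      _ = C * |h| ^ (n + 1) / (n + 1) := by
          rw [intervalIntegral.integral_const_mul]
          have : (∫ s in h..(0:ℝ), (-s) ^ n) = ∫ s in (0:ℝ)..(-h), s ^ n := by
            simpa using intervalIntegral.integral_comp_neg (a := h) (b := 0) (fun s => s ^ n)
          rw [this, integral_pow, abs_of_neg hneg]; ring_nf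


lemma taylor2_bound (φ : ℝ → ℝ) (t ε3 : ℝ) (hφ : ContDiff ℝ 3 φ)
    (h3 : ∀ s, |deriv (deriv (deriv φ)) s| ≤ ε3) :
    ∀ h : ℝ, |φ (t + h) - φ t - deriv φ t * h - deriv (deriv φ) t * h ^ 2 / 2|
      ≤ ε3 * |h| ^ 3 / 6 := by
  have hd : Differentiable ℝ φ ∧ Differentiable ℝ (deriv φ) ∧
      Differentiable ℝ (deriv (deriv φ)) ∧ Continuous (deriv (deriv (deriv φ))) := by
    rw [show (3 : WithTop ℕ∞) = 2 + 1 from rfl, contDiff_succ_iff_deriv] at hφ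
    obtain ⟨h1, -, hφ⟩ := hφ
    rw [show (2 : WithTop ℕ∞) = 1 + 1 from rfl, contDiff_succ_iff_deriv] at hφ
    obtain ⟨h2, -, hφ⟩ := hφ
    rw [contDiff_one_iff_deriv] at hφ
    exact ⟨h1, h2, hφ.1, hφ.2⟩
  obtain ⟨d0, d1, d2, c3⟩ := hd
  -- level 2
  have hr2 : ∀ h : ℝ, |deriv (deriv φ) (t + h) - deriv (deriv φ) t| ≤ ε3 * |h| := by
    have := ftc_pow_bound (fun h => deriv (deriv φ) (t + h) - deriv (deriv φ) t)
      (fun s => deriv (deriv (deriv φ)) (t + s)) ε3 0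
      (fun s => (((d2 (t + s)).hasDerivAt.comp_const_add t s)).sub_const _)
      (c3.comp (continuous_const.add continuous_id)) (by simp)
      (fun s => by simpa using h3 (t + s))
    intro h; simpa using this h
  -- level 1
  have hr1 : ∀ h : ℝ, |deriv φ (t + h) - deriv φ t - deriv (deriv φ) t * h|
      ≤ ε3 * |h| ^ 2 / 2 := by
    have := ftc_pow_bound (fun h => deriv φ (t + h) - deriv φ t - deriv (deriv φ) t * h)
      (fun s => deriv (deriv φ) (t + s) - deriv (deriv φ) t) ε3 1
      (fun s => by
        simpa using ((((d1 (t + s)).hasDerivAt.comp_const_add t s)).sub_const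
          (deriv φ t)).fun_sub ((hasDerivAt_id s).const_mul (deriv (deriv φ) t)))
      (((d2.continuous.comp (continuous_const.add continuous_id)).sub continuous_const))
      (by simp) (fun s => by simpa using hr2 s)
    intro h; have h2 := this h; norm_num [sq_abs] at h2 ⊢; linarith
  -- level 0
  intro h
  have := ftc_pow_bound
    (fun h => φ (t + h) - φ t - deriv φ t * h - deriv (deriv φ) t * h ^ 2 / 2)
    (fun s => deriv φ (t + s) - deriv φ t - deriv (deriv φ) t * s) (ε3 / 2) 2
    (fun s => by
      have h1 : HasDerivAt (fun h : ℝ => φ (t + h) - φ t - deriv φ t * h)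
          (deriv φ (t + s) - deriv φ t) s := by
        simpa using ((((d0 (t + s)).hasDerivAt.comp_const_add t s)).sub_const
          (φ t)).fun_sub ((hasDerivAt_id s).const_mul (deriv φ t))
      have h2 : HasDerivAt (fun h : ℝ => deriv (deriv φ) t * h ^ 2 / 2)
          (deriv (deriv φ) t * s) s := by
        have := ((hasDerivAt_pow 2 s).const_mul (deriv (deriv φ) t)).div_const 2
        simpa using this.congr_deriv (by ring)
      simpa using h1.fun_sub h2)
    (((d1.continuous.comp (continuous_const.add continuous_id)).sub
      continuous_const).sub (continuous_const.mul continuous_id))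
    (by simp)
    (fun s => by have := hr1 s; linarith [hr1 s])
    h
  calc |φ (t + h) - φ t - deriv φ t * h - deriv (deriv φ) t * h ^ 2 / 2|
      ≤ ε3 / 2 * |h| ^ (2 + 1) / (2 + 1) := by simpa using this
    _ = ε3 * |h| ^ 3 / 6 := by norm_num; ring

lemma norm_expI_sub (a b : ℝ) :
    ‖Complex.exp (↑a * Complex.I) - Complex.exp (↑b * Complex.I)‖ ≤ |a - b| := by
  have key : ∀ c : ℝ, ‖Complex.exp (↑c * Complex.I) - 1‖ ≤ |c| := by
    intro c
    have hd : ∀ s : ℝ, HasDerivAt (fun s : ℝ => Complex.exp (↑s * Complex.I))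
        (Complex.exp (↑s * Complex.I) * Complex.I) s := by
      intro s
      have h1 : HasDerivAt (fun s : ℝ => (↑s * Complex.I : ℂ)) Complex.I s := by
        simpa using (Complex.ofRealCLM.hasDerivAt (x := s)).mul_const Complex.I
      simpa [Function.comp_def] using (Complex.hasDerivAt_exp (↑s * Complex.I)).comp s h1
    have := intervalIntegral.integral_eq_sub_of_hasDerivAt (a := 0) (b := c)
      (fun s _ => hd s)
      (Continuous.intervalIntegrable (by continuity) _ _)
    rw [show Complex.exp (↑(0:ℝ) * Complex.I) = 1 by simp] at this
    rw [← this]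
    have := intervalIntegral.norm_integral_le_of_norm_le_const (C := 1)
      (f := fun s : ℝ => Complex.exp (↑s * Complex.I) * Complex.I) (a := 0) (b := c)
      (fun s _ => by simp [Complex.norm_exp_ofReal_mul_I])
    simpa using this
  calc ‖Complex.exp (↑a * Complex.I) - Complex.exp (↑b * Complex.I)‖
      = ‖Complex.exp (↑b * Complex.I) * (Complex.exp (↑(a - b) * Complex.I) - 1)‖ := by
        rw [mul_sub, mul_one, ← Complex.exp_add]; push_cast; ring_nf
    _ = ‖Complex.exp (↑(a - b) * Complex.I) - 1‖ := by
        rw [norm_mul]; simp [Complex.norm_exp_ofReal_mul_I]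
    _ ≤ |a - b| := key _



def cE (r : ℝ) : ℂ := Complex.exp ((r : ℂ) * Complex.I)

lemma cE_mul (a b : ℝ) : cE a * cE b = cE (a + b) := by
  unfold cE; rw [← Complex.exp_add]; push_cast; ring_nf

lemma cE_norm (r : ℝ) : ‖cE r‖ = 1 := Complex.norm_exp_ofReal_mul_I r

lemma conv_neg (c d e : ℝ) : Complex.exp (-(2 * (π : ℂ) * c * d * e) * Complex.I)
    = cE (-(2 * π * c * d * e)) := by unfold cE; push_cast; ring_nf

lemma astft_subst (x : ℝ → ℂ) (g : ℝ → ℝ) (σ : ℝ → ℝ) (t η : ℝ) (hσt : 0 < σ t) :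
    aSTFT x g σ t η =
      ∫ u : ℝ, x (t + σ t * u) * (g u : ℂ) *
        Complex.exp (-(2 * (π : ℂ) * η * ((σ t * u : ℝ) : ℂ)) * Complex.I) := by
  unfold aSTFT
  have h := MeasureTheory.Measure.integral_comp_mul_left
    (fun τ => x (t + τ) * (((σ t)⁻¹ * g (τ / σ t) : ℝ) : ℂ) *
      Complex.exp (-(2 * (π : ℂ) * η * τ) * Complex.I)) (σ t)
  have h2 : (σ t : ℝ) • (∫ u : ℝ, x (t + σ t * u) * (((σ t)⁻¹ * g (σ t * u / σ t) : ℝ) : ℂ) *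
      Complex.exp (-(2 * (π : ℂ) * η * ((σ t * u : ℝ) : ℂ)) * Complex.I))
      = ∫ τ : ℝ, x (t + τ) * (((σ t)⁻¹ * g (τ / σ t) : ℝ) : ℂ) *
        Complex.exp (-(2 * (π : ℂ) * η * τ) * Complex.I) := by
    rw [h, smul_smul]
    rw [abs_of_pos (inv_pos.mpr hσt), mul_inv_cancel₀ hσt.ne', one_smul]
  rw [← h2, ← integral_smul]
  congr 1; funext u
  rw [mul_div_cancel_left₀ _ hσt.ne']
  rw [Complex.real_smul]
  have hne : (σ t : ℂ) ≠ 0 := by exact_mod_cast hσt.ne'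
  push_cast
  field_simp

lemma conv_xcompExp (v : ℝ) :
    Complex.exp ((2 * (π : ℂ) * (v : ℂ)) * Complex.I) = cE (2 * π * v) := by
  unfold cE; push_cast; ring_nf

lemma conv_negmul (c d : ℝ) :
    Complex.exp (-(2 * (π : ℂ) * (c : ℂ) * (d : ℂ)) * Complex.I) = cE (-(2 * π * c * d)) := by
  unfold cE; push_cast; ring_nf

lemma norm_xcomp (A φ : ℕ → ℝ → ℝ) (k : ℕ) (y : ℝ) : ‖xcomp A φ k y‖ = |A k y| := by
  unfold xcomp; rw [norm_mul, conv_xcompExp, cE_norm, mul_one, Complex.norm_real,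
    Real.norm_eq_abs]

def fInt (A φ : ℕ → ℝ → ℝ) (g : ℝ → ℝ) (σ : ℝ → ℝ) (t η : ℝ) (k : ℕ) (u : ℝ) : ℂ :=
  xcomp A φ k (t + σ t * u) * (g u : ℂ) *
    Complex.exp (-(2 * (π : ℂ) * η * ((σ t * u : ℝ) : ℂ)) * Complex.I)

def mInt (A φ : ℕ → ℝ → ℝ) (g : ℝ → ℝ) (σ : ℝ → ℝ) (t η : ℝ) (k : ℕ) (u : ℝ) : ℂ :=
  xcomp A φ k t * (Complex.exp (((π * crate φ σ k t * u ^ 2 : ℝ) : ℂ) * Complex.I) *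
    (g u : ℂ) *
    Complex.exp (-(2 * (π : ℂ) * ((σ t * (η - deriv (φ k) t) : ℝ) : ℂ) * (u : ℂ)) * Complex.I))

lemma cE_regroup (a b c d e : ℝ) (Az G : ℂ) (hsum : a + b + c = d + e) :
    Az * (cE b * G * cE c) * cE a = Az * cE d * (G * cE e) := by
  rw [show Az * (cE b * G * cE c) * cE a = Az * (cE a * cE b * cE c) * G from by ring,
    cE_mul, cE_mul, hsum, ← cE_mul]; ring

lemma key_ptwise (K : ℕ) (A φ : ℕ → ℝ → ℝ) (ε1 ε3 : ℝ) (g : ℝ → ℝ) (σ : ℝ → ℝ)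
    (t η : ℝ) (hσt : 0 < σ t) (k : ℕ) (hk : k ≤ K)
    (hApos : ∀ k ≤ K, ∀ s, 0 < A k s)
    (hAlip : ∀ k ≤ K, ∀ s τ, |A k (s + τ) - A k s| ≤ ε1 * |τ| * A k s)
    (htay : ∀ k ≤ K, ∀ h : ℝ, |φ k (t + h) - φ k t - deriv (φ k) t * h -
      deriv (deriv (φ k)) t * h ^ 2 / 2| ≤ ε3 * |h| ^ 3 / 6)
    (u : ℝ) :
    ‖fInt A φ g σ t η k u - mInt A φ g σ t η k u‖ ≤
      A k t * (ε1 * σ t * (|u| ^ 1 * |g u|) + π / 3 * ε3 * σ t ^ 3 * (|u| ^ 3 * |g u|)) := by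
  set s := σ t with hs
  set r1 : ℝ := 2 * π * φ k (t + s * u) with hr1
  set P : ℝ := 2 * π * φ k t + π * crate φ σ k t * u ^ 2 + 2 * π * (deriv (φ k) t) * (s * u)
    with hP
  have e1 : fInt A φ g σ t η k u
      = ((A k (t + s * u) : ℂ) * cE r1) * ((g u : ℂ) * cE (-(2 * π * η * (s * u)))) := by
    unfold fInt xcomp
    rw [conv_xcompExp, conv_negmul]; ring
  have e2 : mInt A φ g σ t η k u
      = ((A k t : ℂ) * cE P) * ((g u : ℂ) * cE (-(2 * π * η * (s * u)))) := by
    unfold mInt xcomp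
    rw [conv_xcompExp, conv_negmul,
      show Complex.exp (((π * crate φ σ k t * u ^ 2 : ℝ) : ℂ) * Complex.I)
        = cE (π * crate φ σ k t * u ^ 2) from rfl]
    rw [show ((A k t : ℂ) * cE (2 * π * φ k t)) *
        (cE (π * crate φ σ k t * u ^ 2) * (g u : ℂ) * cE (-(2 * π * (s * (η - deriv (φ k) t)) * u)))
        = (A k t : ℂ) * (cE (π * crate φ σ k t * u ^ 2) * (g u : ℂ) *
            cE (-(2 * π * (s * (η - deriv (φ k) t)) * u))) * cE (2 * π * φ k t) from by ring]
    rw [cE_regroup (2 * π * φ k t) (π * crate φ σ k t * u ^ 2)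
      (-(2 * π * (s * (η - deriv (φ k) t)) * u)) P (-(2 * π * η * (s * u)))
      ((A k t : ℂ)) (g u : ℂ) (by rw [hP]; ring)]
  rw [e1, e2, ← sub_mul, norm_mul, norm_mul, cE_norm, mul_one, Complex.norm_real,
    Real.norm_eq_abs]
  have hA1 : ‖((A k (t + s * u) : ℂ) * cE r1 - (A k t : ℂ) * cE P)‖
      ≤ |A k (t + s * u) - A k t| + A k t * |r1 - P| := by
    calc ‖((A k (t + s * u) : ℂ) * cE r1 - (A k t : ℂ) * cE P)‖
        ≤ ‖((A k (t + s * u) : ℂ) * cE r1 - (A k t : ℂ) * cE r1)‖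
          + ‖((A k t : ℂ) * cE r1 - (A k t : ℂ) * cE P)‖ := by
          exact norm_sub_le_norm_sub_add_norm_sub _ _ _
      _ ≤ |A k (t + s * u) - A k t| + A k t * |r1 - P| := by
          gcongr
          · rw [← sub_mul, norm_mul, cE_norm, mul_one]
            rw [show ((A k (t + s * u) : ℂ) - (A k t : ℂ)) = ((A k (t + s * u) - A k t : ℝ) : ℂ)
              from by push_cast; ring, Complex.norm_real, Real.norm_eq_abs]
          · rw [← mul_sub, norm_mul, Complex.norm_real, Real.norm_eq_abs,
              abs_of_pos (hApos k hk t)]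
            exact mul_le_mul_of_nonneg_left (norm_expI_sub r1 P) (hApos k hk t).le
  have hlip : |A k (t + s * u) - A k t| ≤ ε1 * s * |u| * A k t := by
    have := hAlip k hk t (s * u)
    rwa [abs_mul, abs_of_pos hσt, ← mul_assoc] at this
  have htp : |r1 - P| ≤ π / 3 * ε3 * s ^ 3 * |u| ^ 3 := by
    have h1 := htay k hk (s * u)
    have heq : r1 - P = 2 * π * (φ k (t + s * u) - φ k t - deriv (φ k) t * (s * u)
        - deriv (deriv (φ k)) t * (s * u) ^ 2 / 2) := by
      rw [hr1, hP]; unfold crate; rw [← hs]; ring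
    rw [heq, abs_mul, abs_of_pos (by positivity : (0:ℝ) < 2 * π)]
    calc 2 * π * |φ k (t + s * u) - φ k t - deriv (φ k) t * (s * u)
          - deriv (deriv (φ k)) t * (s * u) ^ 2 / 2|
        ≤ 2 * π * (ε3 * |s * u| ^ 3 / 6) := by gcongr
      _ = π / 3 * ε3 * s ^ 3 * |u| ^ 3 := by
          rw [abs_mul, abs_of_pos hσt, mul_pow]; ring
  have hgnn : (0:ℝ) ≤ |g u| := abs_nonneg _
  have hAnn : (0:ℝ) ≤ A k t := (hApos k hk t).le
  calc ‖((A k (t + s * u) : ℂ) * cE r1 - (A k t : ℂ) * cE P)‖ * |g u|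
      ≤ (ε1 * s * |u| * A k t + A k t * (π / 3 * ε3 * s ^ 3 * |u| ^ 3)) * |g u| := by
        apply mul_le_mul_of_nonneg_right _ hgnn
        calc ‖((A k (t + s * u) : ℂ) * cE r1 - (A k t : ℂ) * cE P)‖
            ≤ |A k (t + s * u) - A k t| + A k t * |r1 - P| := hA1
          _ ≤ ε1 * s * |u| * A k t + A k t * (π / 3 * ε3 * s ^ 3 * |u| ^ 3) := by
              gcongr
    _ = A k t * (ε1 * s * (|u| ^ 1 * |g u|) + π / 3 * ε3 * s ^ 3 * (|u| ^ 3 * |g u|)) := by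
        ring

lemma happrox (K : ℕ) (A φ : ℕ → ℝ → ℝ) (ε1 ε3 : ℝ) (x : ℝ → ℂ) (g : ℝ → ℝ)
    (σ : ℝ → ℝ) (t η : ℝ) (hσt : 0 < σ t)
    (hAcont : ∀ k ≤ K, Continuous (A k))
    (hφcont : ∀ k ≤ K, Continuous (φ k))
    (hApos : ∀ k ≤ K, ∀ s, 0 < A k s)
    (hAlip : ∀ k ≤ K, ∀ s τ, |A k (s + τ) - A k s| ≤ ε1 * |τ| * A k s)
    (htay : ∀ k ≤ K, ∀ h : ℝ, |φ k (t + h) - φ k t - deriv (φ k) t * h -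
      deriv (deriv (φ k)) t * h ^ 2 / 2| ≤ ε3 * |h| ^ 3 / 6)
    (hx : ∀ s, x s = ∑ k ∈ Finset.range (K + 1), xcomp A φ k s)
    (hgint : Integrable g)
    (hgI1 : Integrable fun τ : ℝ => τ * g τ)
    (hgI3 : Integrable fun τ : ℝ => τ ^ 3 * g τ) :
    ‖aSTFT x g σ t η - ∑ k ∈ Finset.range (K + 1),
        xcomp A φ k t * chirpG g (crate φ σ k t) (σ t * (η - deriv (φ k) t))‖
      ≤ Msum K A t * Pi0 g σ ε1 ε3 t := by
  have hgabs : Integrable (fun u : ℝ => |g u|) := hgint.abs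
  have hI1 : Integrable (fun u : ℝ => |u| ^ 1 * |g u|) := by
    simpa [abs_mul, pow_one] using hgI1.abs
  have hI3 : Integrable (fun u : ℝ => |u| ^ 3 * |g u|) := by
    simpa [abs_mul, abs_pow] using hgI3.abs
  have hgc : AEStronglyMeasurable (fun u : ℝ => (g u : ℂ)) volume :=
    Complex.continuous_ofReal.comp_aestronglyMeasurable hgint.1
  -- integrability of fInt
  have hfint : ∀ k ≤ K, Integrable (fInt A φ g σ t η k) := by
    intro k hk
    have hc1 : Continuous fun u : ℝ => xcomp A φ k (t + σ t * u) := by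
      unfold xcomp
      apply Continuous.mul
      · exact Complex.continuous_ofReal.comp ((hAcont k hk).comp (by continuity))
      · exact Complex.continuous_exp.comp (by
          apply Continuous.mul _ continuous_const
          exact continuous_const.mul
            (Complex.continuous_ofReal.comp ((hφcont k hk).comp (by continuity))))
    have hc2 : Continuous fun u : ℝ =>
        Complex.exp (-(2 * (π : ℂ) * η * ((σ t * u : ℝ) : ℂ)) * Complex.I) := by
      apply Complex.continuous_exp.comp
      apply Continuous.mul _ continuous_const
      exact (continuous_const.mul
        (Complex.continuous_ofReal.comp (continuous_const.mul continuous_id))).neg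
    apply Integrable.mono'
      ((hgabs.const_mul (A k t)).add (hI1.const_mul (ε1 * σ t * A k t)))
      (((hc1.aestronglyMeasurable.mul hgc).mul hc2.aestronglyMeasurable))
    filter_upwards with u
    have hnorm : ‖fInt A φ g σ t η k u‖ = A k (t + σ t * u) * |g u| := by
      unfold fInt
      rw [norm_mul, norm_mul, norm_xcomp, conv_negmul, cE_norm, mul_one,
        Complex.norm_real, Real.norm_eq_abs, abs_of_pos (hApos k hk _)]
    show ‖fInt A φ g σ t η k u‖ ≤ A k t * |g u| + ε1 * σ t * A k t * (|u| ^ 1 * |g u|)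
    rw [hnorm]
    have hlip := hAlip k hk t (σ t * u)
    have h1 : A k (t + σ t * u) ≤ A k t + ε1 * (σ t * |u|) * A k t := by
      have := abs_le.mp hlip
      rw [abs_mul, abs_of_pos hσt] at hlip
      nlinarith [abs_le.mp hlip]
    have hgnn : (0:ℝ) ≤ |g u| := abs_nonneg _
    calc A k (t + σ t * u) * |g u| ≤ (A k t + ε1 * (σ t * |u|) * A k t) * |g u| := by gcongr
      _ = A k t * |g u| + ε1 * σ t * A k t * (|u| ^ 1 * |g u|) := by ring
  -- integrability of mInt
  have hmint : ∀ k ≤ K, Integrable (mInt A φ g σ t η k) := by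
    intro k hk
    have hc3 : Continuous fun u : ℝ =>
        Complex.exp (((π * crate φ σ k t * u ^ 2 : ℝ) : ℂ) * Complex.I) := by
      apply Complex.continuous_exp.comp
      exact (Complex.continuous_ofReal.comp (by continuity)).mul continuous_const
    have hc4 : Continuous fun u : ℝ =>
        Complex.exp (-(2 * (π : ℂ) * ((σ t * (η - deriv (φ k) t) : ℝ) : ℂ) * (u : ℂ)) *
          Complex.I) := by
      apply Complex.continuous_exp.comp
      exact ((continuous_const.mul Complex.continuous_ofReal).neg).mul continuous_const
    have hinner : Integrable (fun u : ℝ =>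
        Complex.exp (((π * crate φ σ k t * u ^ 2 : ℝ) : ℂ) * Complex.I) * (g u : ℂ) *
          Complex.exp (-(2 * (π : ℂ) * ((σ t * (η - deriv (φ k) t) : ℝ) : ℂ) * (u : ℂ)) *
            Complex.I)) := by
      apply Integrable.mono' hgabs
        ((hc3.aestronglyMeasurable.mul hgc).mul hc4.aestronglyMeasurable)
      filter_upwards with u
      show ‖Complex.exp (((π * crate φ σ k t * u ^ 2 : ℝ) : ℂ) * Complex.I) * (g u : ℂ) *
          Complex.exp (-(2 * (π : ℂ) * ((σ t * (η - deriv (φ k) t) : ℝ) : ℂ) * (u : ℂ)) *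
            Complex.I)‖ ≤ |g u|
      rw [norm_mul, norm_mul, conv_negmul, cE_norm, mul_one,
        show Complex.exp (((π * crate φ σ k t * u ^ 2 : ℝ) : ℂ) * Complex.I)
          = cE (π * crate φ σ k t * u ^ 2) from rfl, cE_norm, one_mul,
        Complex.norm_real, Real.norm_eq_abs]
    exact hinner.const_mul (xcomp A φ k t)
  -- rewrite both sides as integrals
  have hV : aSTFT x g σ t η = ∫ u : ℝ, ∑ k ∈ Finset.range (K + 1), fInt A φ g σ t η k u := by
    rw [astft_subst x g σ t η hσt]
    congr 1; funext u
    rw [hx (t + σ t * u), Finset.sum_mul, Finset.sum_mul]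
    rfl
  have hM : ∑ k ∈ Finset.range (K + 1),
      xcomp A φ k t * chirpG g (crate φ σ k t) (σ t * (η - deriv (φ k) t))
      = ∫ u : ℝ, ∑ k ∈ Finset.range (K + 1), mInt A φ g σ t η k u := by
    rw [integral_finset_sum _ (fun k hk => hmint k (Nat.lt_succ_iff.mp (Finset.mem_range.mp hk)))]
    refine Finset.sum_congr rfl (fun k _ => ?_)
    rw [chirpG, ← integral_const_mul]
    rfl
  rw [hV, hM, ← integral_sub
    (integrable_finset_sum _ (fun k hk => hfint k (Nat.lt_succ_iff.mp (Finset.mem_range.mp hk))))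
    (integrable_finset_sum _ (fun k hk => hmint k (Nat.lt_succ_iff.mp (Finset.mem_range.mp hk))))]
  have hbint : Integrable (fun u : ℝ => Msum K A t *
      (ε1 * σ t * (|u| ^ 1 * |g u|) + π / 3 * ε3 * σ t ^ 3 * (|u| ^ 3 * |g u|))) :=
    ((hI1.const_mul (ε1 * σ t)).add (hI3.const_mul (π / 3 * ε3 * σ t ^ 3))).const_mul _
  calc ‖∫ u : ℝ, (∑ k ∈ Finset.range (K + 1), fInt A φ g σ t η k u)
        - ∑ k ∈ Finset.range (K + 1), mInt A φ g σ t η k u‖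
      ≤ ∫ u : ℝ, Msum K A t *
          (ε1 * σ t * (|u| ^ 1 * |g u|) + π / 3 * ε3 * σ t ^ 3 * (|u| ^ 3 * |g u|)) := by
        apply norm_integral_le_of_norm_le hbint
        filter_upwards with u
        rw [← Finset.sum_sub_distrib]
        calc ‖∑ k ∈ Finset.range (K + 1), (fInt A φ g σ t η k u - mInt A φ g σ t η k u)‖
            ≤ ∑ k ∈ Finset.range (K + 1), ‖fInt A φ g σ t η k u - mInt A φ g σ t η k u‖ :=
              norm_sum_le _ _
          _ ≤ ∑ k ∈ Finset.range (K + 1), A k t *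
              (ε1 * σ t * (|u| ^ 1 * |g u|) + π / 3 * ε3 * σ t ^ 3 * (|u| ^ 3 * |g u|)) := by
              apply Finset.sum_le_sum
              intro k hk
              exact key_ptwise K A φ ε1 ε3 g σ t η hσt k (Nat.lt_succ_iff.mp (Finset.mem_range.mp hk)) hApos hAlip htay u
          _ = Msum K A t *
              (ε1 * σ t * (|u| ^ 1 * |g u|) + π / 3 * ε3 * σ t ^ 3 * (|u| ^ 3 * |g u|)) := by
              rw [Msum, ← Finset.sum_mul]
    _ = Msum K A t * Pi0 g σ ε1 ε3 t := by
        rw [MeasureTheory.integral_const_mul, integral_add (hI1.const_mul _) (hI3.const_mul _),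
          MeasureTheory.integral_const_mul, MeasureTheory.integral_const_mul]
        rw [Pi0, momentI, momentI]; ring

lemma chirp_eq_breve (g : ℝ → ℝ) (c ξ : ℝ) : chirpG g c ξ = breveG g (-c) ξ := by
  unfold chirpG breveG
  congr 1; funext τ
  have h : -(2 * (π:ℂ) * ξ * τ) * Complex.I - ((π * (-c) * τ ^ 2 : ℝ) : ℂ) * Complex.I
      = ((π * c * τ ^ 2 : ℝ) : ℂ) * Complex.I + -(2 * (π:ℂ) * ξ * τ) * Complex.I := by
    push_cast; ring
  rw [h, Complex.exp_add]; ring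

lemma chirp_mono (g : ℝ → ℝ)
    (hadm_even : ∀ lam ξ, ‖breveG g lam (-ξ)‖ = ‖breveG g lam ξ‖)
    (hadm_dec : ∀ lam ξ1 ξ2, 0 ≤ ξ1 → ξ1 ≤ ξ2 → ‖breveG g lam ξ2‖ ≤ ‖breveG g lam ξ1‖)
    (c : ℝ) {a b : ℝ} (ha : 0 ≤ a) (hab : a ≤ |b|) :
    ‖chirpG g c b‖ ≤ ‖chirpG g c a‖ := by
  rw [chirp_eq_breve, chirp_eq_breve]
  rcases le_or_gt 0 b with hb | hb
  · exact hadm_dec _ a b ha (by rwa [abs_of_nonneg hb] at hab)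
  · have h1 : ‖breveG g (-c) b‖ = ‖breveG g (-c) (-b)‖ := by
      rw [← hadm_even (-c) b]
    rw [h1]
    exact hadm_dec _ a (-b) ha (by rwa [abs_of_neg hb] at hab)

lemma interval_gap {ck cl rk rl : ℝ} (hrk : 0 < rk) (hrl : 0 < rl)
    (hd : Disjoint {η : ℝ | |η - ck| < rk} {η : ℝ | |η - cl| < rl}) :
    rk + rl ≤ |ck - cl| := by
  by_contra hlt
  push_neg at hlt
  rw [Set.disjoint_left] at hd
  set p := (ck * rl + cl * rk) / (rk + rl) with hp
  have hsum : (0:ℝ) < rk + rl := by linarith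
  have habs : |cl - ck| < rk + rl := by rw [abs_sub_comm]; exact hlt
  have h1 : |p - ck| < rk := by
    have he : p - ck = (cl - ck) * rk / (rk + rl) := by rw [hp]; field_simp; ring
    rw [he, abs_div, abs_mul, abs_of_pos hrk, abs_of_pos hsum, div_lt_iff₀ hsum]
    nlinarith [abs_nonneg (cl - ck)]
  have h2 : |p - cl| < rl := by
    have he : p - cl = (ck - cl) * rl / (rk + rl) := by rw [hp]; field_simp; ring
    rw [he, abs_div, abs_mul, abs_of_pos hrl, abs_of_pos hsum, div_lt_iff₀ hsum]
    rw [abs_sub_comm] at habs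
    nlinarith [abs_nonneg (ck - cl)]
  exact hd (Set.mem_setOf.mpr h1) (Set.mem_setOf.mpr h2)

lemma teles (K : ℕ) (c α : ℕ → ℝ)
    (hgap : ∀ m, m + 1 ≤ K → α m + α (m + 1) ≤ c (m + 1) - c m) :
    ∀ j l, j < l → l ≤ K →
      α j + α l + 2 * ∑ m ∈ Finset.Ioo j l, α m ≤ c l - c j := by
  intro j l hjl
  induction l, hjl using Nat.le_induction with
  | base =>
    intro hK
    have he : Finset.Ioo j (j + 1) = ∅ := by
      apply Finset.eq_empty_of_forall_notMem; intro m hm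
      rw [Finset.mem_Ioo] at hm; omega
    rw [he]
    have := hgap j hK
    simp only [Finset.sum_empty]
    linarith
  | succ l hjl ih =>
    intro hK
    have hK' : l ≤ K := by omega
    have hIoo : Finset.Ioo j (l + 1) = insert l (Finset.Ioo j l) := by
      ext m; rw [Finset.mem_Ioo, Finset.mem_insert, Finset.mem_Ioo]; omega
    have hnotmem : l ∉ Finset.Ioo j l := by simp
    rw [hIoo, Finset.sum_insert hnotmem]
    have h1 := hgap l hK
    have h2 := ih hK'
    linarith

theorem thm3_1a (K : ℕ) (A φ : ℕ → ℝ → ℝ) (ε1 ε3 : ℝ) (x : ℝ → ℂ)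
    (g : ℝ → ℝ) (σ : ℝ → ℝ) (αf : ℕ → ℝ) (τ0 t epst : ℝ)
    (hε1 : 0 < ε1) (hε3 : 0 < ε3)
    (hAreg : ∀ k ≤ K, ContDiff ℝ 1 (A k))
    (hAbdd : ∀ k ≤ K, ∃ C, ∀ s, |A k s| ≤ C)
    (hφreg : ∀ k ≤ K, ContDiff ℝ 3 (φ k))
    (hφ0 : ∀ s, φ 0 s = 0)
    (hApos : ∀ k ≤ K, ∀ s, 0 < A k s)
    (hφ'pos : ∀ k, 1 ≤ k → k ≤ K → ∃ c > 0, ∀ s, c ≤ deriv (φ k) s)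
    (hφ'bdd : ∀ k, 1 ≤ k → k ≤ K → ∃ C, ∀ s, deriv (φ k) s ≤ C)
    (hfreq : ∃ d > 0, ∀ k, 2 ≤ k → k ≤ K → ∀ s, d ≤ deriv (φ k) s - deriv (φ (k - 1)) s)
    (hAlip : ∀ k ≤ K, ∀ s τ, |A k (s + τ) - A k s| ≤ ε1 * |τ| * A k s)
    (hφ''bdd : ∀ k ≤ K, ∃ C, ∀ s, |deriv (deriv (φ k)) s| ≤ C)
    (hφthird : ∀ k, 1 ≤ k → k ≤ K → ∀ s, |deriv (deriv (deriv (φ k))) s| ≤ ε3)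
    (hx : ∀ s, x s = ∑ k ∈ Finset.range (K + 1), xcomp A φ k s)
    (hgint : Integrable g)
    (hgL2 : MemLp g 2 (volume : Measure ℝ))
    (hgI1 : Integrable fun τ : ℝ => τ * g τ)
    (hgI3 : Integrable fun τ : ℝ => τ ^ 3 * g τ)
    (hgnorm : (∫ τ : ℝ, g τ) = 1)
    (hadm_even : ∀ lam ξ, ‖breveG g lam (-ξ)‖ = ‖breveG g lam ξ‖)
    (hadm_dec : ∀ lam ξ1 ξ2, 0 ≤ ξ1 → ξ1 ≤ ξ2 → ‖breveG g lam ξ2‖ ≤ ‖breveG g lam ξ1‖)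
    (hσ : ∀ s, 0 < σ s)
    (hτ0 : 0 < τ0) (hτ0' : τ0 < 1)
    (hξk : ∀ k ≤ K, ∃ ξk, 0 < ξk ∧ ‖chirpG g (crate φ σ k t) ξk‖ = τ0 ∧ ξk ≤ αf k)
    (hdisj : ∀ k ≤ K, ∀ l ≤ K, k ≠ l →
      Disjoint {η : ℝ | |η - deriv (φ k) t| < αf k / σ t}
        {η : ℝ | |η - deriv (φ l) t| < αf l / σ t})
    (hErrsmall : ∀ l ≤ K,
      ErrL K A φ g σ αf ε1 ε3 l t < 1 / 2 * ‖chirpG g (crate φ σ l t) 0‖ * A l t)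
    (hmain : 2 * Msum K A t * (τ0 + Pi0 g σ ε1 ε3 t) ≤ g0min K g φ σ t * muMin K A t)
    (heps1 : Msum K A t * (τ0 + Pi0 g σ ε1 ε3 t) ≤ epst)
    (heps2 : epst ≤ g0min K g φ σ t * muMin K A t - Msum K A t * (τ0 + Pi0 g σ ε1 ε3 t))
    :
    (Gt x g σ t epst = ⋃ k ∈ Finset.range (K + 1), Htk x g σ φ αf t epst k) ∧
    (∀ k ≤ K, ∀ l ≤ K, k ≠ l →
      Disjoint (Htk x g σ φ αf t epst k) (Htk x g σ φ αf t epst l)) ∧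
    (∀ k ≤ K, deriv (φ k) t ∈ Htk x g σ φ αf t epst k) := by
  classical
  have hσt : 0 < σ t := hσ t
  have hAcont : ∀ k ≤ K, Continuous (A k) := fun k hk => (hAreg k hk).continuous
  have hφcont : ∀ k ≤ K, Continuous (φ k) := fun k hk => (hφreg k hk).continuous
  -- Taylor bound
  have htay : ∀ k ≤ K, ∀ h : ℝ, |φ k (t + h) - φ k t - deriv (φ k) t * h -
      deriv (deriv (φ k)) t * h ^ 2 / 2| ≤ ε3 * |h| ^ 3 / 6 := by
    intro k hk h
    rcases Nat.eq_zero_or_pos k with rfl | hkpos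
    · have h0 : φ 0 = fun _ => (0:ℝ) := funext hφ0
      rw [h0]
      simp only [deriv_const', deriv_const]
      norm_num
      positivity
    · exact taylor2_bound (φ k) t ε3 (hφreg k hk) (hφthird k hkpos hk) h
  have happ : ∀ η, ‖aSTFT x g σ t η - ∑ k ∈ Finset.range (K + 1),
      xcomp A φ k t * chirpG g (crate φ σ k t) (σ t * (η - deriv (φ k) t))‖
        ≤ Msum K A t * Pi0 g σ ε1 ε3 t :=
    fun η => happrox K A φ ε1 ε3 x g σ t η hσt hAcont hφcont hApos hAlip htay hx
      hgint hgI1 hgI3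
  have hαpos : ∀ k ≤ K, 0 < αf k := by
    intro k hk; obtain ⟨ξk, hp, _, hle⟩ := hξk k hk; linarith
  have hGle : ∀ k ≤ K, ∀ b : ℝ, αf k ≤ |b| → ‖chirpG g (crate φ σ k t) b‖ ≤ τ0 := by
    intro k hk b hb
    obtain ⟨ξk, hp, heq, hle⟩ := hξk k hk
    calc ‖chirpG g (crate φ σ k t) b‖ ≤ ‖chirpG g (crate φ σ k t) ξk‖ :=
        chirp_mono g hadm_even hadm_dec _ hp.le (le_trans hle hb)
      _ = τ0 := heq
  have hnormmain : ∀ k ≤ K, ∀ ξ : ℝ,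
      ‖xcomp A φ k t * chirpG g (crate φ σ k t) ξ‖
        = A k t * ‖chirpG g (crate φ σ k t) ξ‖ := by
    intro k hk ξ
    rw [norm_mul, norm_xcomp, abs_of_pos (hApos k hk t)]
  -- Part 1 key: Gt subset
  have hsubset : ∀ η, η ∈ Gt x g σ t epst → ∃ k, k ≤ K ∧ |η - deriv (φ k) t| < αf k / σ t := by
    intro η hη
    have hη' : epst < ‖aSTFT x g σ t η‖ := hη
    by_contra hnone
    push_neg at hnone
    have h2 : ‖∑ k ∈ Finset.range (K + 1),
        xcomp A φ k t * chirpG g (crate φ σ k t) (σ t * (η - deriv (φ k) t))‖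
        ≤ τ0 * Msum K A t := by
      calc ‖∑ k ∈ Finset.range (K + 1),
          xcomp A φ k t * chirpG g (crate φ σ k t) (σ t * (η - deriv (φ k) t))‖
          ≤ ∑ k ∈ Finset.range (K + 1),
            ‖xcomp A φ k t * chirpG g (crate φ σ k t) (σ t * (η - deriv (φ k) t))‖ :=
          norm_sum_le _ _
        _ ≤ ∑ k ∈ Finset.range (K + 1), τ0 * A k t := by
            apply Finset.sum_le_sum
            intro k hk
            have hkK : k ≤ K := Nat.lt_succ_iff.mp (Finset.mem_range.mp hk)
            rw [hnormmain k hkK]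
            have hge : αf k ≤ |σ t * (η - deriv (φ k) t)| := by
              rw [abs_mul, abs_of_pos hσt]
              have h3 := hnone k hkK
              have h4 : σ t * (αf k / σ t) = αf k := by field_simp
              calc αf k = σ t * (αf k / σ t) := h4.symm
                _ ≤ σ t * |η - deriv (φ k) t| := by gcongr
            have := hGle k hkK _ hge
            calc A k t * ‖chirpG g (crate φ σ k t) (σ t * (η - deriv (φ k) t))‖
                ≤ A k t * τ0 := by
                  exact mul_le_mul_of_nonneg_left this (hApos k hkK t).le
              _ = τ0 * A k t := mul_comm _ _
        _ = τ0 * Msum K A t := by rw [Msum, Finset.mul_sum]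
    have h1 := happ η
    have hVle : ‖aSTFT x g σ t η‖ ≤ Msum K A t * Pi0 g σ ε1 ε3 t + τ0 * Msum K A t := by
      calc ‖aSTFT x g σ t η‖
          ≤ ‖aSTFT x g σ t η - ∑ k ∈ Finset.range (K + 1),
              xcomp A φ k t * chirpG g (crate φ σ k t) (σ t * (η - deriv (φ k) t))‖
            + ‖∑ k ∈ Finset.range (K + 1),
              xcomp A φ k t * chirpG g (crate φ σ k t) (σ t * (η - deriv (φ k) t))‖ := by
            have := norm_sub_le_norm_sub_add_norm_sub (aSTFT x g σ t η)
              (∑ k ∈ Finset.range (K + 1),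
                xcomp A φ k t * chirpG g (crate φ σ k t) (σ t * (η - deriv (φ k) t))) 0
            simpa using this
        _ ≤ Msum K A t * Pi0 g σ ε1 ε3 t + τ0 * Msum K A t := add_le_add h1 h2
    have hexp : Msum K A t * Pi0 g σ ε1 ε3 t + τ0 * Msum K A t
        = Msum K A t * (τ0 + Pi0 g σ ε1 ε3 t) := by ring
    linarith
  -- gap chain
  have hgap' : ∀ m, m + 1 ≤ K →
      αf m + αf (m + 1) ≤ σ t * deriv (φ (m + 1)) t - σ t * deriv (φ m) t := by
    intro m hm
    have hd := hdisj m (by omega) (m + 1) hm (by omega)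
    have hig := interval_gap (div_pos (hαpos m (by omega)) hσt)
      (div_pos (hαpos (m + 1) hm) hσt) hd
    have hmono : deriv (φ m) t < deriv (φ (m + 1)) t := by
      rcases Nat.eq_zero_or_pos m with rfl | hm1
      · have h0 : φ 0 = fun _ => (0:ℝ) := funext hφ0
        obtain ⟨cpos, hcpos, hcle⟩ := hφ'pos 1 le_rfl hm
        rw [h0]
        simp only [deriv_const']
        calc (0:ℝ) < cpos := hcpos
          _ ≤ deriv (φ 1) t := hcle t
      · obtain ⟨d, hd0, hdle⟩ := hfreq
        have h5 := hdle (m + 1) (by omega) hm t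
        rw [Nat.add_sub_cancel] at h5
        linarith
    rw [abs_of_neg (by linarith : deriv (φ m) t - deriv (φ (m + 1)) t < 0)] at hig
    have h6 := mul_le_mul_of_nonneg_left hig hσt.le
    have h7 : σ t * (αf m / σ t + αf (m + 1) / σ t) = αf m + αf (m + 1) := by
      field_simp
    nlinarith
  have htel := teles K (fun k => σ t * deriv (φ k) t) αf hgap'
  have hIoonn : ∀ j l : ℕ, l ≤ K → (0:ℝ) ≤ ∑ m ∈ Finset.Ioo j l, αf m := by
    intro j l hl
    apply Finset.sum_nonneg
    intro m hm
    exact (hαpos m (le_of_lt (lt_of_lt_of_le (Finset.mem_Ioo.mp hm).2 hl))).le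
  have hUps : ∀ k ≤ K, ∀ l ≤ K, k ≠ l →
      Ups αf k l ≤ σ t * |deriv (φ l) t - deriv (φ k) t| := by
    intro k hk l hl hkl
    rcases lt_or_gt_of_ne hkl with h | h
    · have h1 := htel k l h hl
      have hIk := hαpos k hk
      have hIl := hαpos l hl
      have hI := hIoonn k l hl
      have h2 : 0 < σ t * deriv (φ l) t - σ t * deriv (φ k) t := by linarith
      have h3 : 0 < deriv (φ l) t - deriv (φ k) t := by nlinarith
      rw [Ups, min_eq_left h.le, max_eq_right h.le, abs_of_pos h3, mul_sub]
      linarith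
    · have h1 := htel l k h hk
      have hIk := hαpos k hk
      have hIl := hαpos l hl
      have hI := hIoonn l k hk
      have h2 : 0 < σ t * deriv (φ k) t - σ t * deriv (φ l) t := by linarith
      have h3 : 0 < deriv (φ k) t - deriv (φ l) t := by nlinarith
      rw [Ups, min_eq_right h.le, max_eq_left h.le, abs_sub_comm, abs_of_pos h3, mul_sub]
      linarith
  -- min facts
  have hμpos : 0 < muMin K A t := by
    rw [muMin, Finset.lt_inf'_iff]
    intro k hk
    exact hApos k (Nat.lt_succ_iff.mp (Finset.mem_range.mp hk)) t
  have hg0nn : 0 ≤ g0min K g φ σ t := by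
    rw [g0min, Finset.le_inf'_iff]
    intro k _
    exact norm_nonneg _
  have hμle : ∀ l ≤ K, muMin K A t ≤ A l t := by
    intro l hl
    exact Finset.inf'_le _ (Finset.mem_range.mpr (Nat.lt_succ_of_le hl))
  have hg0le : ∀ l ≤ K, g0min K g φ σ t ≤ ‖chirpG g (crate φ σ l t) 0‖ := by
    intro l hl
    exact Finset.inf'_le _ (Finset.mem_range.mpr (Nat.lt_succ_of_le hl))
  -- Part 3 key: lower bound at the ridge
  have hlower : ∀ l ≤ K, epst < ‖aSTFT x g σ t (deriv (φ l) t)‖ := by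
    intro l hl
    set η := deriv (φ l) t with hη
    have hlmem : l ∈ Finset.range (K + 1) := Finset.mem_range.mpr (Nat.lt_succ_of_le hl)
    have h1 := happ η
    have hsplit : ∑ k ∈ Finset.range (K + 1),
        xcomp A φ k t * chirpG g (crate φ σ k t) (σ t * (η - deriv (φ k) t))
        = xcomp A φ l t * chirpG g (crate φ σ l t) (σ t * (η - deriv (φ l) t))
          + ∑ k ∈ (Finset.range (K + 1)).erase l,
            xcomp A φ k t * chirpG g (crate φ σ k t) (σ t * (η - deriv (φ k) t)) :=
      (Finset.add_sum_erase _ _ hlmem).symm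
    have hmainl : ‖xcomp A φ l t * chirpG g (crate φ σ l t) (σ t * (η - deriv (φ l) t))‖
        = A l t * ‖chirpG g (crate φ σ l t) 0‖ := by
      rw [hnormmain l hl]
      congr 2
      rw [← hη]; ring
    have hrest : ‖∑ k ∈ (Finset.range (K + 1)).erase l,
        xcomp A φ k t * chirpG g (crate φ σ k t) (σ t * (η - deriv (φ k) t))‖
        ≤ τ0 * (Msum K A t - A l t) := by
      calc ‖∑ k ∈ (Finset.range (K + 1)).erase l,
          xcomp A φ k t * chirpG g (crate φ σ k t) (σ t * (η - deriv (φ k) t))‖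
          ≤ ∑ k ∈ (Finset.range (K + 1)).erase l,
            ‖xcomp A φ k t * chirpG g (crate φ σ k t) (σ t * (η - deriv (φ k) t))‖ :=
          norm_sum_le _ _
        _ ≤ ∑ k ∈ (Finset.range (K + 1)).erase l, τ0 * A k t := by
            apply Finset.sum_le_sum
            intro k hk
            have hkl : k ≠ l := Finset.ne_of_mem_erase hk
            have hkK : k ≤ K := Nat.lt_succ_iff.mp
              (Finset.mem_range.mp (Finset.mem_of_mem_erase hk))
            rw [hnormmain k hkK]
            have hge : αf k ≤ |σ t * (η - deriv (φ k) t)| := by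
              rw [abs_mul, abs_of_pos hσt]
              have hU := hUps k hkK l hl hkl
              have hUlow : αf k ≤ Ups αf k l := by
                rw [Ups]
                have := hαpos l hl
                have : 0 ≤ ∑ m ∈ Finset.Ioo (min k l) (max k l), αf m := by
                  apply hIoonn
                  rcases le_total k l with hc | hc
                  · rw [max_eq_right hc]; exact hl
                  · rw [max_eq_left hc]; exact hkK
                have := hαpos l hl
                linarith
              have habs : |η - deriv (φ k) t| = |deriv (φ l) t - deriv (φ k) t| := by
                rw [hη]
              rw [habs]
              nlinarith
            have := hGle k hkK _ hge
            calc A k t * ‖chirpG g (crate φ σ k t) (σ t * (η - deriv (φ k) t))‖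
                ≤ A k t * τ0 := mul_le_mul_of_nonneg_left this (hApos k hkK t).le
              _ = τ0 * A k t := mul_comm _ _
        _ = τ0 * (Msum K A t - A l t) := by
            rw [← Finset.mul_sum, Finset.sum_erase_eq_sub hlmem, Msum]
    -- combine
    have hnsum : ‖xcomp A φ l t * chirpG g (crate φ σ l t) (σ t * (η - deriv (φ l) t))‖
        - ‖∑ k ∈ (Finset.range (K + 1)).erase l,
            xcomp A φ k t * chirpG g (crate φ σ k t) (σ t * (η - deriv (φ k) t))‖
        ≤ ‖∑ k ∈ Finset.range (K + 1),
            xcomp A φ k t * chirpG g (crate φ σ k t) (σ t * (η - deriv (φ k) t))‖ := by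
      rw [hsplit]
      have := norm_le_add_norm_add
        (xcomp A φ l t * chirpG g (crate φ σ l t) (σ t * (η - deriv (φ l) t)))
        (∑ k ∈ (Finset.range (K + 1)).erase l,
          xcomp A φ k t * chirpG g (crate φ σ k t) (σ t * (η - deriv (φ k) t)))
      linarith
    have hVge : ‖∑ k ∈ Finset.range (K + 1),
        xcomp A φ k t * chirpG g (crate φ σ k t) (σ t * (η - deriv (φ k) t))‖
        - Msum K A t * Pi0 g σ ε1 ε3 t ≤ ‖aSTFT x g σ t η‖ := by
      have h9 := norm_sub_norm_le
        (∑ k ∈ Finset.range (K + 1),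
          xcomp A φ k t * chirpG g (crate φ σ k t) (σ t * (η - deriv (φ k) t)))
        (aSTFT x g σ t η)
      rw [norm_sub_rev] at h9
      linarith
    have hprod : g0min K g φ σ t * muMin K A t
        ≤ ‖chirpG g (crate φ σ l t) 0‖ * A l t :=
      mul_le_mul (hg0le l hl) (hμle l hl) hμpos.le (norm_nonneg _)
    have hτA : 0 < τ0 * A l t := mul_pos hτ0 (hApos l hl t)
    have he1 : τ0 * (Msum K A t - A l t) = τ0 * Msum K A t - τ0 * A l t := by ring
    have he2 : Msum K A t * (τ0 + Pi0 g σ ε1 ε3 t)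
        = τ0 * Msum K A t + Msum K A t * Pi0 g σ ε1 ε3 t := by ring
    rw [hmainl] at hnsum
    linarith
  refine ⟨?_, ?_, ?_⟩
  · ext η
    simp only [Set.mem_iUnion]
    constructor
    · intro hη
      obtain ⟨k, hk, hlt⟩ := hsubset η hη
      exact ⟨k, Finset.mem_range.mpr (Nat.lt_succ_of_le hk), hη, hlt⟩
    · rintro ⟨k, hk, hmem⟩
      exact hmem.1
  · intro k hk l hl hkl
    exact Set.disjoint_of_subset (fun η hη => hη.2) (fun η hη => hη.2) (hdisj k hk l hl hkl)
  · intro k hk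
    refine ⟨hlower k hk, ?_⟩
    simpa using div_pos (hαpos k hk) hσt
end
end
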